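/- arXiv:math/0106055 — 5 statements merged into one kernel-verified Lean document; each statement's English description precedes it below -/
import Mathlib

section
/- Let G be a finite group acting by ℤ-linear automorphisms on a free ℤ-module Λ of finite rank, and let V := ℚ ⊗_ℤ Λ. Let e be a central idempotent of ℚ[G] and suppose e = p_1 + … + p_n where p_1, …, p_n are pairwise orthogonal idempotents of ℚ[G] that are pairwise conjugate, i.e. for each j there is a unit u_j of the algebra e·ℚ[G] with p_j = u_j p_1 u_j⁻¹. Then the subgroups Λ ∩ p_j V all have the same rank, and the (direct) sum Σ_j (Λ ∩ p_j V) has finite index in Λ ∩ eV. -/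
open scoped TensorProduct

section Aux

variable {V : Type} [AddCommGroup V] [Module ℚ V]

private theorem aux_nzsd : NoZeroSMulDivisors ℤ V := by
  constructor
  intro m v h
  rcases eq_or_ne m 0 with h0 | h0
  · exact Or.inl h0
  · right
    have h1 : ((m : ℚ)) • v = 0 := by rwa [Int.cast_smul_eq_zsmul]
    rcases smul_eq_zero.mp h1 with h2 | h2
    · exact absurd (by exact_mod_cast h2) h0
    · exact h2

private theorem aux_span (L : Submodule ℤ V)
    (hden : ∀ v : V, ∃ m : ℤ, m ≠ 0 ∧ m • v ∈ L) (W : Submodule ℚ V) :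
    Submodule.span ℚ ((L ⊓ W.restrictScalars ℤ : Submodule ℤ V) : Set V) = W := by
  apply le_antisymm
  · rw [Submodule.span_le]
    intro x hx
    rw [SetLike.mem_coe, Submodule.mem_inf] at hx
    exact hx.2
  · intro w hw
    obtain ⟨m, hm0, hmL⟩ := hden w
    have hmw : m • w = ((m : ℚ)) • w := (Int.cast_smul_eq_zsmul ℚ m w).symm
    have hw2 : m • w ∈ W.restrictScalars ℤ := by
      rw [Submodule.restrictScalars_mem, hmw]
      exact W.smul_mem _ hw
    have hmem : (m • w : V) ∈ (L ⊓ W.restrictScalars ℤ : Submodule ℤ V) :=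
      Submodule.mem_inf.mpr ⟨hmL, hw2⟩
    have h1 : ((m : ℚ)) • w ∈ Submodule.span ℚ ((L ⊓ W.restrictScalars ℤ : Submodule ℤ V) : Set V) := by
      rw [← hmw]; exact Submodule.subset_span hmem
    have h2 := Submodule.smul_mem _ ((m : ℚ)⁻¹) h1
    rwa [smul_smul, inv_mul_cancel₀ (by exact_mod_cast hm0), one_smul] at h2

private theorem aux_finite_of_le {L M : Submodule ℤ V} (h : M ≤ L) [Module.Finite ℤ L] :
    Module.Finite ℤ M := by
  haveI : IsNoetherian ℤ L := isNoetherian_of_isNoetherianRing_of_finite ℤ L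
  have hfg : (Submodule.comap L.subtype M).FG := IsNoetherian.noetherian _
  haveI : Module.Finite ℤ (Submodule.comap L.subtype M) := Module.Finite.iff_fg.mpr hfg
  exact Module.Finite.equiv (Submodule.comapSubtypeEquivOfLe h)

private theorem aux_finrank (M : Submodule ℤ V) [Module.Finite ℤ M] :
    Module.finrank ℤ M = Module.finrank ℚ (Submodule.span ℚ (M : Set V)) := by
  haveI : NoZeroSMulDivisors ℤ V := aux_nzsd
  haveI : Module.Free ℤ M := Module.free_of_finite_type_torsion_free'
  let ι := Module.Free.ChooseBasisIndex ℤ M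
  let b : Module.Basis ι ℤ M := Module.Free.chooseBasis ℤ M
  have hli : LinearIndependent ℤ (fun i => (b i : V)) :=
    b.linearIndependent.map' M.subtype (Submodule.ker_subtype M)
  have hliQ : LinearIndependent ℚ (fun i => (b i : V)) :=
    (LinearIndependent.iff_fractionRing ℤ ℚ).mp hli
  have hspan : Submodule.span ℚ (Set.range fun i => (b i : V)) =
      Submodule.span ℚ (M : Set V) := by
    apply le_antisymm
    · exact Submodule.span_mono (by rintro _ ⟨i, rfl⟩; exact (b i).2)
    · rw [Submodule.span_le]
      intro x hx
      rw [SetLike.mem_coe] at hx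
      have h1 : (⟨x, hx⟩ : M) ∈ Submodule.span ℤ (Set.range b) := by
        rw [b.span_eq]; trivial
      have h2 : x ∈ Submodule.map M.subtype (Submodule.span ℤ (Set.range b)) :=
        ⟨⟨x, hx⟩, h1, rfl⟩
      rw [Submodule.map_span] at h2
      have h3 : M.subtype '' Set.range b = Set.range fun i => (b i : V) := by
        ext y; simp [Set.mem_image, Set.mem_range]
      rw [h3] at h2
      exact Submodule.span_le_restrictScalars ℤ ℚ _ h2
  rw [← hspan, finrank_span_eq_card hliQ, Module.finrank_eq_card_chooseBasisIndex]

private theorem aux_range_finrank_le [FiniteDimensional ℚ V] (a b c : Module.End ℚ V) :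
    Module.finrank ℚ (LinearMap.range (a * b * c)) ≤ Module.finrank ℚ (LinearMap.range b) := by
  have h1 : LinearMap.range (a * b * c) ≤ LinearMap.range (a * b) := by
    rw [Module.End.mul_eq_comp (a * b) c]
    exact LinearMap.range_comp_le_range c (a * b)
  calc Module.finrank ℚ (LinearMap.range (a * b * c))
      ≤ Module.finrank ℚ (LinearMap.range (a * b)) := Submodule.finrank_mono h1
    _ = Module.finrank ℚ (Submodule.map a (LinearMap.range b)) := by
        rw [Module.End.mul_eq_comp, LinearMap.range_comp]
    _ ≤ Module.finrank ℚ (LinearMap.range b) := Submodule.finrank_map_le a _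

end Aux

private theorem aux_den (Λ : Type) [AddCommGroup Λ] [Module ℤ Λ] (v : ℚ ⊗[ℤ] Λ) :
    ∃ m : ℤ, m ≠ 0 ∧ m • v ∈ LinearMap.range (TensorProduct.mk ℤ ℚ Λ 1) := by
  induction v using TensorProduct.induction_on with
  | zero => exact ⟨1, one_ne_zero, by simp⟩
  | tmul q a =>
    refine ⟨(q.den : ℤ), by exact_mod_cast q.den_ne_zero, ?_⟩
    have h1 : ((q.den : ℤ) • q) = ((q.num : ℚ)) := by
      rw [zsmul_eq_mul]
      push_cast
      rw [mul_comm, Rat.mul_den_eq_num]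
    have h2 : (q.den : ℤ) • (q ⊗ₜ[ℤ] a) = (q.num : ℤ) • ((1 : ℚ) ⊗ₜ[ℤ] a) := by
      rw [TensorProduct.smul_tmul', TensorProduct.smul_tmul', h1]
      congr 1
      rw [zsmul_eq_mul, mul_one]
    rw [h2]
    exact Submodule.smul_mem _ _ ⟨a, rfl⟩
  | add x y hx hy =>
    obtain ⟨mx, hmx0, hmx⟩ := hx
    obtain ⟨my, hmy0, hmy⟩ := hy
    refine ⟨mx * my, mul_ne_zero hmx0 hmy0, ?_⟩
    have : (mx * my) • (x + y) = my • (mx • x) + mx • (my • y) := by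
      rw [smul_add, smul_smul, smul_smul, mul_comm my mx]
    rw [this]
    exact Submodule.add_mem _ (Submodule.smul_mem _ _ hmx) (Submodule.smul_mem _ _ hmy)

/-- With `G` acting `ℤ`-linearly on a free `ℤ`-module `Λ` of finite rank and
`V = ℚ ⊗_ℤ Λ` (with `Λ` embedded as `ΛZ` via `x ↦ 1 ⊗ x`), let `e` be a central idempotent
of `ℚ[G]` written as `e = p 1 + … + p n` with the `p j` pairwise orthogonal idempotents
which are pairwise conjugate by units of the algebra `e·ℚ[G]`.  Then the subgroups
`Λ ∩ (p j)·V` all have the same rank, and their (direct) sum has finite index in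
`Λ ∩ e·V`. -/
theorem stmt7 (G : Type) [Group G] [Fintype G]
    (Λ : Type) [AddCommGroup Λ] [Module ℤ Λ] [Module.Free ℤ Λ] [Module.Finite ℤ Λ]
    (ρ : Representation ℤ G Λ)
    (e : MonoidAlgebra ℚ G)
    (hcent : e ∈ Subalgebra.center ℚ (MonoidAlgebra ℚ G))
    (hee : e * e = e)
    (n : ℕ) (hn : 0 < n) (p : Fin n → MonoidAlgebra ℚ G)
    (hidem : ∀ j, p j * p j = p j)
    (horth : ∀ j k, j ≠ k → p j * p k = 0)
    (hsum : ∑ j, p j = e)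
    -- the `p j` are pairwise conjugate by units of the algebra `e·ℚ[G]` (whose unit is `e`):
    (hconj : ∀ j, ∃ u v : MonoidAlgebra ℚ G,
      e * u = u ∧ e * v = v ∧ u * v = e ∧ v * u = e ∧ p j = u * p ⟨0, hn⟩ * v)
    (ρQ : Representation ℚ G (ℚ ⊗[ℤ] Λ))
    (hρQ : ∀ g : G, ρQ g = LinearMap.baseChange ℚ (ρ g))
    (ΛZ : Submodule ℤ (ℚ ⊗[ℤ] Λ))
    (hΛZ : ΛZ = LinearMap.range (TensorProduct.mk ℤ ℚ Λ 1))
    (Λp : Fin n → Submodule ℤ (ℚ ⊗[ℤ] Λ))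
    (hΛp : ∀ j, Λp j =
      ΛZ ⊓ (LinearMap.range (Representation.asAlgebraHom ρQ (p j))).restrictScalars ℤ)
    (Λe : Submodule ℤ (ℚ ⊗[ℤ] Λ))
    (hΛe : Λe =
      ΛZ ⊓ (LinearMap.range (Representation.asAlgebraHom ρQ e)).restrictScalars ℤ) :
    (∀ j k, Module.finrank ℤ (Λp j) = Module.finrank ℤ (Λp k)) ∧
    iSupIndep Λp ∧
    ((⨆ j, Λp j).toAddSubgroup.addSubgroupOf Λe.toAddSubgroup).FiniteIndex := by
  set π := Representation.asAlgebraHom ρQ with hπ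
  have hden : ∀ v : ℚ ⊗[ℤ] Λ, ∃ m : ℤ, m ≠ 0 ∧ m • v ∈ ΛZ := by
    rw [hΛZ]; exact aux_den Λ
  haveI : Module.Finite ℤ ↥ΛZ := by
    rw [hΛZ]; infer_instance
  -- basic algebra facts
  have hpe : ∀ j, e * p j = p j := by
    intro j
    rw [← hsum, Finset.sum_mul]
    rw [Finset.sum_eq_single j (fun k _ hk => horth k j hk) (by simp)]
    exact hidem j
  have hep : ∀ j, p j * e = p j := by
    intro j
    rw [← hsum, Finset.mul_sum]
    rw [Finset.sum_eq_single j (fun k _ hk => horth j k (Ne.symm hk)) (by simp)]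
    exact hidem j
  have hproj : ∀ j x, x ∈ LinearMap.range (π (p j)) → π (p j) x = x := by
    intro j x hx
    obtain ⟨y, rfl⟩ := hx
    rw [← Module.End.mul_apply, ← map_mul, hidem]
  have hproje : ∀ x, x ∈ LinearMap.range (π e) → π e x = x := by
    intro x hx
    obtain ⟨y, rfl⟩ := hx
    rw [← Module.End.mul_apply, ← map_mul, hee]
  -- Part 1 : equal ranks
  have hrank : ∀ j, Module.finrank ℤ (Λp j) =
      Module.finrank ℚ (LinearMap.range (π (p j))) := by
    intro j
    haveI : Module.Finite ℤ
        ↥(ΛZ ⊓ (LinearMap.range (π (p j))).restrictScalars ℤ) :=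
      aux_finite_of_le inf_le_left
    rw [hΛp j, aux_finrank, aux_span ΛZ hden]
  have hconj' : ∀ j, Module.finrank ℚ (LinearMap.range (π (p j))) =
      Module.finrank ℚ (LinearMap.range (π (p ⟨0, hn⟩))) := by
    intro j
    obtain ⟨u, v, heu, hev, huv, hvu, hpj⟩ := hconj j
    have hback : p ⟨0, hn⟩ = v * p j * u := by
      rw [hpj]
      have h1 : v * (u * p ⟨0, hn⟩ * v) * u = (v * u) * p ⟨0, hn⟩ * (v * u) := by
        simp only [mul_assoc]
      rw [h1, hvu, hpe, hep]
    apply le_antisymm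
    · rw [hpj, map_mul, map_mul]
      exact aux_range_finrank_le _ _ _
    · conv_lhs => rw [hback]
      rw [map_mul, map_mul]
      exact aux_range_finrank_le _ _ _
  refine ⟨fun j k => by rw [hrank j, hrank k, hconj' j, hconj' k], ?_, ?_⟩
  -- Part 2 : independence
  · rw [iSupIndep_def]
    intro i
    refine Submodule.disjoint_def.mpr fun x hxi hxsup => ?_
    have hxr : x ∈ LinearMap.range (π (p i)) := by
      rw [hΛp i] at hxi; exact hxi.2
    have h1 : π (p i) x = x := hproj i x hxr
    have h2 : (⨆ j, ⨆ _ : j ≠ i, Λp j) ≤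
        (LinearMap.ker (π (p i))).restrictScalars ℤ := by
      refine iSup_le fun j => iSup_le fun hj => ?_
      intro z hz
      have hzr : z ∈ LinearMap.range (π (p j)) := by
        rw [hΛp j] at hz; exact hz.2
      obtain ⟨w, rfl⟩ := hzr
      rw [Submodule.restrictScalars_mem, LinearMap.mem_ker, ← Module.End.mul_apply,
        ← map_mul, horth i j (Ne.symm hj), map_zero, LinearMap.zero_apply]
    have h3 := h2 hxsup
    rw [Submodule.restrictScalars_mem, LinearMap.mem_ker] at h3
    rw [← h1, h3]
  -- Part 3 : finite index
  · -- a common denominator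
    have hfgΛZ : ΛZ.FG := Module.Finite.iff_fg.mp inferInstance
    obtain ⟨S, hS⟩ := hfgΛZ
    choose f hf0 hfm using hden
    set N : ℤ := ∏ j : Fin n, ∏ s ∈ S, f (π (p j) s) with hN
    have hN0 : N ≠ 0 :=
      Finset.prod_ne_zero_iff.mpr fun j _ => Finset.prod_ne_zero_iff.mpr fun s _ => hf0 _
    have hNsmul : ∀ j, ∀ x ∈ ΛZ, N • π (p j) x ∈ ΛZ := by
      intro j x hx
      have hdvd : ∀ s ∈ S, f (π (p j) s) ∣ N := fun s hs =>
        dvd_trans (Finset.dvd_prod_of_mem (fun s => f (π (p j) s)) hs) (Finset.dvd_prod_of_mem _ (Finset.mem_univ j))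
      rw [← hS] at hx
      induction hx using Submodule.span_induction with
      | mem z hz =>
        obtain ⟨c, hc⟩ := hdvd z hz
        rw [hc, mul_comm, mul_smul]
        exact Submodule.smul_mem _ _ (hfm _)
      | zero => simp
      | add a b _ _ ha hb => rw [map_add, smul_add]; exact Submodule.add_mem _ ha hb
      | smul c a _ h =>
        rw [LinearMap.map_smul_of_tower, smul_comm]
        exact Submodule.smul_mem _ _ h
    have hNmem : ∀ x ∈ Λe, N • x ∈ ⨆ j, Λp j := by
      intro x hx
      rw [hΛe, Submodule.mem_inf, Submodule.restrictScalars_mem] at hx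
      obtain ⟨hxZ, hxr⟩ := hx
      have hex : π e x = x := hproje x hxr
      have hxsum : x = ∑ j, π (p j) x := by
        conv_lhs => rw [← hex, ← hsum]
        rw [map_sum]
        simp [LinearMap.sum_apply]
      have hsmul : N • x = ∑ j, N • π (p j) x := by
        conv_lhs => rw [hxsum]
        rw [Finset.smul_sum]
      rw [hsmul]
      refine Submodule.sum_mem _ fun j _ => ?_
      refine Submodule.mem_iSup_of_mem j ?_
      rw [hΛp j, Submodule.mem_inf, Submodule.restrictScalars_mem]
      exact ⟨hNsmul j x hxZ, ⟨N • x, by rw [LinearMap.map_smul_of_tower]⟩⟩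
    have hleΛe : Λe ≤ ΛZ := by rw [hΛe]; exact inf_le_left
    haveI : Module.Finite ℤ ↥Λe := aux_finite_of_le hleΛe
    set T : Submodule ℤ ↥Λe := Submodule.comap Λe.subtype (⨆ j, Λp j) with hT
    have hquotfin : Finite (↥Λe ⧸ T) := by
      apply Module.finite_of_fg_torsion
      intro x
      obtain ⟨y, rfl⟩ := T.mkQ_surjective x
      refine ⟨⟨N, mem_nonZeroDivisors_of_ne_zero hN0⟩, ?_⟩
      have : (⟨N, mem_nonZeroDivisors_of_ne_zero hN0⟩ : nonZeroDivisors ℤ) • T.mkQ y =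
          T.mkQ (N • y) := by
        rw [Submonoid.smul_def, ← map_smul]
      rw [this, Submodule.mkQ_apply, Submodule.Quotient.mk_eq_zero]
      rw [hT, Submodule.mem_comap]
      have : Λe.subtype (N • y) = N • (y : ℚ ⊗[ℤ] Λ) := by
        simp
      rw [this]
      exact hNmem _ y.2
    have hHeq : (⨆ j, Λp j).toAddSubgroup.addSubgroupOf Λe.toAddSubgroup = T.toAddSubgroup := by
      ext x
      exact Iff.rfl
    rw [hHeq]
    exact @AddSubgroup.finiteIndex_of_finite_quotient _ _ T.toAddSubgroup hquotfin
end

section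
/- Let G be a finite group acting by ℤ-linear automorphisms on a free ℤ-module Λ of finite rank, and let V := ℚ ⊗_ℤ Λ. Let 1 = e_1 + … + e_r be the decomposition of 1 ∈ ℚ[G] into pairwise orthogonal central idempotents, and for each i let e_i = p_{i,1} + … + p_{i,n_i} be a decomposition into pairwise orthogonal idempotents that are pairwise conjugate by units of e_i·ℚ[G]. Then rank Λ = Σ_{i=1}^r n_i · rank(Λ ∩ p_{i,1} V), and the direct sum of all the subgroups Λ ∩ p_{i,j} V has finite index in Λ. -/
open scoped TensorProduct
open Module

/-- rank of a finite ℤ-submodule of a ℚ-vector space equals dim of its ℚ-span. -/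
theorem stmt8_helperA {V : Type*} [AddCommGroup V] [Module ℚ V] (N : Submodule ℤ V)
    [Module.Finite ℤ N] :
    Module.finrank ℤ N = Module.finrank ℚ (Submodule.span ℚ (N : Set V)) := by
  haveI : NoZeroSMulDivisors ℤ ↥N := by
    constructor
    intro c x h
    rcases eq_or_ne c 0 with rfl | hc
    · exact Or.inl rfl
    · right
      ext
      have : (c : ℚ) • (x : V) = 0 := by
        have := congrArg (Subtype.val) h
        push_cast [Submodule.coe_smul_of_tower] at this ⊢
        rw [← Int.cast_smul_eq_zsmul ℚ] at this
        simpa using this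
      simpa [hc, Int.cast_eq_zero (α := ℚ) |>.ne.mpr] using
        (smul_eq_zero.mp this).resolve_left (by exact_mod_cast hc)
  haveI : Module.Free ℤ ↥N := Module.free_of_finite_type_torsion_free'
  let b := Module.Free.chooseBasis ℤ ↥N
  let v : Module.Free.ChooseBasisIndex ℤ ↥N → V := fun i => (b i : V)
  have hli : LinearIndependent ℤ v := b.linearIndependent.map' N.subtype N.ker_subtype
  have hliQ : LinearIndependent ℚ v := (LinearIndependent.iff_fractionRing ℤ ℚ).mp hli
  have hspan : Submodule.span ℚ (Set.range v) = Submodule.span ℚ (N : Set V) := by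
    have h1 : Submodule.span ℤ (Set.range v) = N := by
      have : Set.range v = N.subtype '' Set.range b := by
        rw [← Set.range_comp]; rfl
      rw [this, Submodule.span_image, b.span_eq, Submodule.map_top, Submodule.range_subtype]
    conv_rhs => rw [← h1]
    rw [Submodule.span_span_of_tower]
  rw [Module.finrank_eq_card_chooseBasisIndex, ← hspan, finrank_span_eq_card hliQ]

theorem stmt8_helperB {Λ : Type*} [AddCommGroup Λ] [Module ℤ Λ] (v : ℚ ⊗[ℤ] Λ) :
    ∃ m : ℤ, m ≠ 0 ∧ m • v ∈ LinearMap.range (TensorProduct.mk ℤ ℚ Λ 1) := by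
  induction v using TensorProduct.induction_on with
  | zero => exact ⟨1, one_ne_zero, by simp⟩
  | tmul q x =>
      refine ⟨(q.den : ℤ), by exact_mod_cast q.den_nz, ?_⟩
      have h : (q.den : ℤ) • (q ⊗ₜ[ℤ] x) = q.num • ((1:ℚ) ⊗ₜ[ℤ] x) := by
        rw [TensorProduct.smul_tmul', TensorProduct.smul_tmul']
        congr 1
        rw [zsmul_eq_mul, zsmul_eq_mul, mul_one, Int.cast_natCast, Rat.den_mul_eq_num]
      rw [h]
      exact Submodule.smul_mem _ _ ⟨x, rfl⟩
  | add a b ha hb =>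
      obtain ⟨m1, hm1, h1⟩ := ha
      obtain ⟨m2, hm2, h2⟩ := hb
      refine ⟨m1 * m2, mul_ne_zero hm1 hm2, ?_⟩
      rw [smul_add]
      refine add_mem ?_ ?_
      · rw [mul_comm, mul_smul]; exact Submodule.smul_mem _ _ h1
      · rw [mul_smul]; exact Submodule.smul_mem _ _ h2

/-- With `G` acting `ℤ`-linearly on a free `ℤ`-module `Λ` of finite rank and
`V = ℚ ⊗_ℤ Λ` (with `Λ` embedded as `ΛZ` via `x ↦ 1 ⊗ x`), let `1 = e 1 + … + e r` be the
decomposition of `1 ∈ ℚ[G]` into pairwise orthogonal central idempotents, and for each `i`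
let `e i = p i 1 + … + p i nᵢ` be a decomposition into pairwise orthogonal idempotents that
are pairwise conjugate by units of `(e i)·ℚ[G]`.  Then
`rank Λ = ∑ i, nᵢ · rank (Λ ∩ (p i 1)·V)`, and the direct sum of all the subgroups
`Λ ∩ (p i j)·V` has finite index in `Λ`. -/
theorem stmt8 (G : Type) [Group G] [Fintype G]
    (Λ : Type) [AddCommGroup Λ] [Module ℤ Λ] [Module.Free ℤ Λ] [Module.Finite ℤ Λ]
    (ρ : Representation ℤ G Λ)
    (r : ℕ) (e : Fin r → MonoidAlgebra ℚ G)
    (hcent : ∀ i, e i ∈ Subalgebra.center ℚ (MonoidAlgebra ℚ G))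
    (horth : ∀ i j, i ≠ j → e i * e j = 0)
    (hsum : ∑ i, e i = 1)
    (n : Fin r → ℕ) (hn : ∀ i, 0 < n i)
    (p : (i : Fin r) → Fin (n i) → MonoidAlgebra ℚ G)
    (hidem : ∀ i j, p i j * p i j = p i j)
    (porth : ∀ i j k, j ≠ k → p i j * p i k = 0)
    (psum : ∀ i, ∑ j, p i j = e i)
    -- within each `i` the `p i j` are pairwise conjugate by units of `(e i)·ℚ[G]`:
    (pconj : ∀ i j, ∃ u v : MonoidAlgebra ℚ G,
      e i * u = u ∧ e i * v = v ∧ u * v = e i ∧ v * u = e i ∧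
      p i j = u * p i ⟨0, hn i⟩ * v)
    (ρQ : Representation ℚ G (ℚ ⊗[ℤ] Λ))
    (hρQ : ∀ g : G, ρQ g = LinearMap.baseChange ℚ (ρ g))
    (ΛZ : Submodule ℤ (ℚ ⊗[ℤ] Λ))
    (hΛZ : ΛZ = LinearMap.range (TensorProduct.mk ℤ ℚ Λ 1))
    (Λp : (i : Fin r) → Fin (n i) → Submodule ℤ (ℚ ⊗[ℤ] Λ))
    (hΛp : ∀ i j, Λp i j =
      ΛZ ⊓ (LinearMap.range (Representation.asAlgebraHom ρQ (p i j))).restrictScalars ℤ) :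
    Module.finrank ℤ Λ = ∑ i, n i * Module.finrank ℤ (Λp i ⟨0, hn i⟩) ∧
    iSupIndep (fun x : Σ i : Fin r, Fin (n i) => Λp x.1 x.2) ∧
    ((⨆ x : Σ i : Fin r, Fin (n i), Λp x.1 x.2).toAddSubgroup.addSubgroupOf
        ΛZ.toAddSubgroup).FiniteIndex := by
  classical
  set V := ℚ ⊗[ℤ] Λ
  set A := Representation.asAlgebraHom ρQ with hA
  have hAA : ∀ (a b : MonoidAlgebra ℚ G) (x : V), A a (A b x) = A (a * b) x := by
    intro a b x; rw [map_mul]; rfl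
  -- ring facts
  have hpe : ∀ i j, p i j * e i = p i j := by
    intro i j
    rw [← psum i, Finset.mul_sum]
    rw [Finset.sum_eq_single j (fun k _ hk => porth i j k (Ne.symm hk)) (by simp)]
    exact hidem i j
  have hep : ∀ i j, e i * p i j = p i j := by
    intro i j
    rw [← Subalgebra.mem_center_iff.mp (hcent i) (p i j)]
    exact hpe i j
  have hPorth : ∀ x y : (Σ i : Fin r, Fin (n i)), x ≠ y → p x.1 x.2 * p y.1 y.2 = 0 := by
    rintro ⟨i, j⟩ ⟨i', k⟩ hxy
    rcases eq_or_ne i i' with rfl | hii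
    · exact porth i j k (by rintro rfl; exact hxy rfl)
    · have h1 : p i j * p i' k = (p i j * e i) * (e i' * p i' k) := by
        rw [hpe, hep]
      rw [h1, mul_assoc, ← mul_assoc (e i), horth i i' hii, zero_mul, mul_zero]
  have hPsum : ∑ x : (Σ i : Fin r, Fin (n i)), p x.1 x.2 = 1 := by
    rw [← Finset.univ_sigma_univ, Finset.sum_sigma]
    simp only [psum]
    exact hsum
  -- the subspaces
  set W : (Σ i : Fin r, Fin (n i)) → Submodule ℚ V :=
    fun x => LinearMap.range (A (p x.1 x.2)) with hW
  have hfix : ∀ x (v : V), v ∈ W x → A (p x.1 x.2) v = v := by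
    rintro x v ⟨y, rfl⟩
    rw [hAA, hidem]
  have hWker : ∀ x y : (Σ i : Fin r, Fin (n i)), x ≠ y →
      W y ≤ LinearMap.ker (A (p x.1 x.2)) := by
    rintro x y hxy w ⟨t, rfl⟩
    rw [LinearMap.mem_ker, hAA, hPorth x y hxy, map_zero, LinearMap.zero_apply]
  have hWindep : iSupIndep W := by
    intro x
    rw [disjoint_iff]
    rw [Submodule.eq_bot_iff]
    rintro v ⟨hv1, hv2⟩
    have hker : v ∈ LinearMap.ker (A (p x.1 x.2)) := by
      refine (iSup₂_le fun y hy => hWker x y (Ne.symm hy)) ?_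
      simpa using hv2
    rw [← hfix x v hv1]
    simpa using hker
  have hWtop : ⨆ x, W x = ⊤ := by
    rw [eq_top_iff]
    intro z _
    have hz : z = ∑ x : (Σ i : Fin r, Fin (n i)), A (p x.1 x.2) z := by
      have h1 : A 1 z = z := by rw [map_one]; rfl
      conv_lhs => rw [← h1]
      rw [← hPsum, map_sum]
      exact (LinearMap.sum_apply _ _ _)
    rw [hz]
    exact Submodule.sum_mem _ fun x _ =>
      Submodule.mem_iSup_of_mem x ⟨z, rfl⟩
  -- dimension count
  haveI : Module.Finite ℚ V := inferInstance
  have hint : DirectSum.IsInternal W :=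
    (DirectSum.isInternal_submodule_iff_iSupIndep_and_iSup_eq_top W).mpr ⟨hWindep, hWtop⟩
  have hdim : finrank ℚ V = ∑ x : (Σ i : Fin r, Fin (n i)), finrank ℚ (W x) := by
    rw [← (LinearEquiv.ofBijective (DirectSum.coeLinearMap W) hint).finrank_eq,
      finrank_directSum]
  -- conjugate idempotents have ranges of the same dimension
  have hconjdim : ∀ i j, finrank ℚ (W ⟨i, j⟩) = finrank ℚ (W ⟨i, ⟨0, hn i⟩⟩) := by
    intro i j
    obtain ⟨u, v, heu, hev, huv, hvu, hpj⟩ := pconj i j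
    set z0 : Fin (n i) := ⟨0, hn i⟩ with hz0
    have key1 : p i j * u * p i z0 = u * p i z0 := by
      rw [hpj]
      calc (u * p i z0 * v) * u * p i z0 = u * p i z0 * (v * u) * p i z0 := by
            noncomm_ring
        _ = u * (p i z0 * e i) * p i z0 := by rw [hvu]; noncomm_ring
        _ = u * p i z0 := by rw [hpe, mul_assoc, hidem]
    have key2 : p i z0 * v * p i j = v * p i j := by
      rw [hpj]
      calc p i z0 * v * (u * p i z0 * v) = p i z0 * (v * u) * p i z0 * v := by
            noncomm_ring
        _ = (p i z0 * e i) * p i z0 * v := by rw [hvu]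
        _ = p i z0 * v := by rw [hpe, hidem]
        _ = (e i * p i z0) * v := by rw [hep]
        _ = ((v * u) * p i z0) * v := by rw [hvu]
        _ = v * (u * p i z0 * v) := by noncomm_ring
    have hmem1 : ∀ w : V, w ∈ W ⟨i, z0⟩ → A u w ∈ W ⟨i, j⟩ := by
      intro w hw
      refine ⟨A u w, ?_⟩
      conv_lhs => rw [← hfix ⟨i, z0⟩ w hw]
      rw [hAA, hAA, key1, ← hAA, hfix ⟨i, z0⟩ w hw]
    have hmem2 : ∀ w : V, w ∈ W ⟨i, j⟩ → A v w ∈ W ⟨i, z0⟩ := by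
      intro w hw
      refine ⟨A v w, ?_⟩
      conv_lhs => rw [← hfix ⟨i, j⟩ w hw]
      rw [hAA, hAA, key2, ← hAA, hfix ⟨i, j⟩ w hw]
    have huvw : ∀ w : V, w ∈ W ⟨i, j⟩ → A u (A v w) = w := by
      intro w hw
      conv_lhs => rw [← hfix ⟨i, j⟩ w hw]
      rw [hAA, hAA, show u * v * p i j = p i j by rw [huv, hep]]
      exact hfix ⟨i, j⟩ w hw
    have hvuw : ∀ w : V, w ∈ W ⟨i, z0⟩ → A v (A u w) = w := by
      intro w hw
      conv_lhs => rw [← hfix ⟨i, z0⟩ w hw]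
      rw [hAA, hAA, show v * u * p i z0 = p i z0 by rw [hvu, hep]]
      exact hfix ⟨i, z0⟩ w hw
    let φ : W ⟨i, z0⟩ →ₗ[ℚ] W ⟨i, j⟩ :=
      ((A u).comp (W ⟨i, z0⟩).subtype).codRestrict _ (fun w => hmem1 w.1 w.2)
    let ψ : W ⟨i, j⟩ →ₗ[ℚ] W ⟨i, z0⟩ :=
      ((A v).comp (W ⟨i, j⟩).subtype).codRestrict _ (fun w => hmem2 w.1 w.2)
    have hφψ : φ.comp ψ = LinearMap.id :=
      LinearMap.ext fun w => Subtype.ext (huvw w.1 w.2)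
    have hψφ : ψ.comp φ = LinearMap.id :=
      LinearMap.ext fun w => Subtype.ext (hvuw w.1 w.2)
    exact (LinearEquiv.ofLinear φ ψ hφψ hψφ).finrank_eq.symm
  -- ℚ-spans of the lattice pieces
  have hspanW : ∀ x : (Σ i : Fin r, Fin (n i)),
      Submodule.span ℚ ((Λp x.1 x.2 : Set V)) = W x := by
    intro x
    apply le_antisymm
    · rw [Submodule.span_le]
      intro w hw
      have hw' : w ∈ Λp x.1 x.2 := hw
      rw [hΛp] at hw'
      exact hw'.2
    · intro w hw
      obtain ⟨m, hm, hmem⟩ := stmt8_helperB (Λ := Λ) w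
      have hmw : m • w ∈ Λp x.1 x.2 := by
        rw [hΛp]
        refine Submodule.mem_inf.mpr ⟨by rw [hΛZ]; exact hmem, ?_⟩
        rw [Submodule.restrictScalars_mem, ← Int.cast_smul_eq_zsmul ℚ]
        exact Submodule.smul_mem _ _ hw
      have h2 : ((m : ℚ))⁻¹ • (m • w) ∈ Submodule.span ℚ ((Λp x.1 x.2 : Set V)) :=
        Submodule.smul_mem _ _ (Submodule.subset_span hmw)
      have hmQ : (m : ℚ) ≠ 0 := by exact_mod_cast hm
      rwa [← Int.cast_smul_eq_zsmul ℚ, inv_smul_smul₀ hmQ] at h2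
  -- finiteness of the lattice pieces
  haveI hZfin : Module.Finite ℤ ↥ΛZ := by rw [hΛZ]; exact Module.Finite.range _
  have hfg : ∀ N : Submodule ℤ V, N ≤ ΛZ → Module.Finite ℤ ↥N := by
    intro N hN
    haveI : IsNoetherian ℤ ↥ΛZ := isNoetherian_of_isNoetherianRing_of_finite ℤ ↥ΛZ
    rw [Module.Finite.iff_fg]
    have h1 := Submodule.map_comap_subtype ΛZ N
    rw [inf_eq_right.mpr hN] at h1
    rw [← h1]
    exact (IsNoetherian.noetherian _).map _
  have hΛple : ∀ x : (Σ i : Fin r, Fin (n i)), Λp x.1 x.2 ≤ ΛZ := by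
    intro x; rw [hΛp]; exact inf_le_left
  -- the rank formula
  have hrank : Module.finrank ℤ Λ = ∑ i, n i * Module.finrank ℤ (Λp i ⟨0, hn i⟩) := by
    calc Module.finrank ℤ Λ = finrank ℚ V :=
          (Module.finrank_baseChange (S := ℤ) (R := ℚ) (M' := Λ)).symm
      _ = ∑ x : (Σ i : Fin r, Fin (n i)), finrank ℚ (W x) := hdim
      _ = ∑ i, ∑ j, finrank ℚ (W ⟨i, j⟩) := by
          rw [← Finset.univ_sigma_univ, Finset.sum_sigma]
      _ = ∑ i, n i * Module.finrank ℤ (Λp i ⟨0, hn i⟩) := by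
          refine Finset.sum_congr rfl fun i _ => ?_
          rw [Finset.sum_congr rfl fun j _ => hconjdim i j, Finset.sum_const,
            Finset.card_univ, Fintype.card_fin, smul_eq_mul]
          congr 1
          haveI := hfg _ (hΛple ⟨i, ⟨0, hn i⟩⟩)
          rw [stmt8_helperA (Λp i ⟨0, hn i⟩), hspanW ⟨i, ⟨0, hn i⟩⟩]
  -- independence
  have hWr : iSupIndep (fun x : (Σ i : Fin r, Fin (n i)) => (W x).restrictScalars ℤ) := by
    intro x
    rw [disjoint_iff, Submodule.eq_bot_iff]
    intro z hz
    have hz1 : z ∈ W x := (Submodule.mem_inf.mp hz).1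
    have hz2 : z ∈ (⨆ (y) (_ : y ≠ x), W y).restrictScalars ℤ := by
      refine (iSup₂_le fun y hy => ?_ :
        (⨆ (y) (_ : y ≠ x), (W y).restrictScalars ℤ) ≤ _) (Submodule.mem_inf.mp hz).2
      intro t ht
      exact (le_iSup₂ (f := fun (y : (Σ i : Fin r, Fin (n i))) (_ : y ≠ x) => W y) y hy) ht
    have := (hWindep x).le_bot (Submodule.mem_inf.mpr ⟨hz1, hz2⟩ :
      z ∈ W x ⊓ ⨆ (y) (_ : y ≠ x), W y)
    simpa using this
  have hindep : iSupIndep (fun x : Σ i : Fin r, Fin (n i) => Λp x.1 x.2) :=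
    hWr.mono fun x => by rw [hΛp]; exact inf_le_right
  -- torsion: every vector has a multiple in the direct sum
  have htor : ∀ z : V, ∃ m : ℤ, m ≠ 0 ∧
      m • z ∈ ⨆ x : Σ i : Fin r, Fin (n i), Λp x.1 x.2 := by
    intro z
    choose c hc0 hcm using fun x : (Σ i : Fin r, Fin (n i)) =>
      stmt8_helperB (Λ := Λ) (A (p x.1 x.2) z)
    refine ⟨∏ x, c x, Finset.prod_ne_zero_iff.mpr fun x _ => hc0 x, ?_⟩
    have hz : z = ∑ x : (Σ i : Fin r, Fin (n i)), A (p x.1 x.2) z := by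
      have h1 : A 1 z = z := by rw [map_one]; rfl
      conv_lhs => rw [← h1]
      rw [← hPsum, map_sum]
      exact (LinearMap.sum_apply _ _ _)
    have hmain : (∏ x, c x) • z
        = ∑ x : (Σ i : Fin r, Fin (n i)), (∏ y, c y) • (A (p x.1 x.2) z) := by
      conv_lhs => rw [hz]
      rw [Finset.smul_sum]
    rw [hmain]
    refine Submodule.sum_mem _ fun x _ => ?_
    have hsplit : (∏ y, c y) • (A (p x.1 x.2) z)
        = (∏ y ∈ Finset.univ.erase x, c y) • (c x • (A (p x.1 x.2) z)) := by
      rw [← mul_smul, Finset.prod_erase_mul _ _ (Finset.mem_univ x)]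
    rw [hsplit]
    refine Submodule.smul_mem _ _ (Submodule.mem_iSup_of_mem x ?_)
    rw [hΛp]
    refine Submodule.mem_inf.mpr ⟨by rw [hΛZ]; exact hcm x, ?_⟩
    rw [Submodule.restrictScalars_mem, ← Int.cast_smul_eq_zsmul ℚ]
    exact Submodule.smul_mem _ _ ⟨z, rfl⟩
  -- finite index
  refine ⟨hrank, hindep, ?_⟩
  set S : Submodule ℤ V := ⨆ x : Σ i : Fin r, Fin (n i), Λp x.1 x.2 with hS
  set K : Submodule ℤ ↥ΛZ := S.comap ΛZ.subtype with hK
  haveI : Module.Finite ℤ (↥ΛZ ⧸ K) :=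
    Module.Finite.of_surjective K.mkQ (Submodule.mkQ_surjective K)
  have htorq : Module.IsTorsion ℤ (↥ΛZ ⧸ K) := by
    intro q
    obtain ⟨z, rfl⟩ := Submodule.mkQ_surjective K q
    obtain ⟨m, hm, hmem⟩ := htor (z : V)
    refine ⟨⟨m, mem_nonZeroDivisors_of_ne_zero hm⟩, ?_⟩
    have : K.mkQ (m • z) = 0 := by
      rw [Submodule.mkQ_apply, Submodule.Quotient.mk_eq_zero]
      exact Submodule.mem_comap.mpr (by simpa using hmem)
    simpa using this
  haveI hfin : Finite (↥ΛZ ⧸ K) := Module.finite_of_fg_torsion _ htorq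
  haveI : Finite (↥ΛZ.toAddSubgroup ⧸ S.toAddSubgroup.addSubgroupOf ΛZ.toAddSubgroup) := by
    exact hfin
  exact AddSubgroup.finiteIndex_of_finite_quotient
end

section
/- Let G be a finite group and (W, ρ) a finite-dimensional ℚ-representation of G with End_{ℚ[G]}(W) = ℚ·id (i.e. W is absolutely irreducible). Let B be a G-invariant positive-definite symmetric bilinear form on W and let w_1, …, w_n be a B-orthogonal basis of W, where n = dim_ℚ W. For each i define p_{w_i} := (n / (|G| · B(w_i, w_i))) · Σ_{g ∈ G} B(w_i, g·w_i) · g ∈ ℚ[G]. Then p_{w_i}² = p_{w_i} for all i, p_{w_i} · p_{w_j} = 0 for i ≠ j, the sum p_{w_1} + … + p_{w_n} is central in ℚ[G], ρ(p_{w_1} + … + p_{w_n}) = id_W, and p_{w_1} + … + p_{w_n} acts as zero on every irreducible ℚ-representation of G not isomorphic to W. -/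
open CategoryTheory

section stmt9aux
variable {G : Type} [Group G] [Fintype G] (W : FDRep ℚ G)
set_option linter.unusedSectionVars false

lemma aux_trace {ι : Type} [Fintype ι] [DecidableEq ι] (w : Module.Basis ι ℚ W) (f : W →ₗ[ℚ] W) :
    LinearMap.trace ℚ W f = ∑ i, w.repr (f (w i)) i := by
  rw [LinearMap.trace_eq_matrix_trace ℚ w f, Matrix.trace]
  simp [Matrix.diag, LinearMap.toMatrix_apply]

lemma aux_sum_repr {ι : Type} [Fintype ι] [DecidableEq ι] (w : Module.Basis ι ℚ W)
    (φ : W →ₗ[ℚ] ℚ) (v : W) : ∑ i, φ (w i) * w.repr v i = φ v := by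
  conv_rhs => rw [← w.sum_repr v]
  rw [map_sum]
  exact Finset.sum_congr rfl fun i _ => by rw [map_smul, smul_eq_mul, mul_comm]

lemma aux_key
    (hEnd : ∀ f : W →ₗ[ℚ] W, (∀ g : G, f ∘ₗ W.ρ g = W.ρ g ∘ₗ f) →
      ∃ c : ℚ, f = c • (LinearMap.id : W →ₗ[ℚ] W))
    (B : W →ₗ[ℚ] W →ₗ[ℚ] ℚ)
    (hsymm : ∀ v w : W, B v w = B w v)
    (hinv : ∀ (g : G) (v w : W), B (W.ρ g v) (W.ρ g w) = B v w)
    (n : ℕ) (hn : n = Module.finrank ℚ W) (hnQ : (n : ℚ) ≠ 0)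
    (u v u' v' : W) :
    ∑ g : G, B u (W.ρ g v) * B v' (W.ρ g u') =
      ((Fintype.card G : ℚ) / n) * (B u' v * B u v') := by
  classical
  set f : W →ₗ[ℚ] W := LinearMap.smulRight (B u') v with hf
  set F : W →ₗ[ℚ] W := ∑ g : G, (W.ρ g) ∘ₗ f ∘ₗ (W.ρ g⁻¹) with hF
  have hρρ : ∀ (a b : G) (x : W), W.ρ a (W.ρ b x) = W.ρ (a * b) x := by
    intro a b x
    rw [map_mul, Module.End.mul_apply]
  have hcomm : ∀ h : G, F ∘ₗ W.ρ h = W.ρ h ∘ₗ F := by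
    intro h
    refine LinearMap.ext fun x => ?_
    simp only [LinearMap.comp_apply, hF, LinearMap.sum_apply, map_sum]
    refine (Fintype.sum_equiv (Equiv.mulLeft h) _ _ fun g => ?_).symm
    simp only [LinearMap.comp_apply, Equiv.coe_mulLeft]
    rw [hρρ (h*g)⁻¹ h x, hρρ h g]
    congr 2
    group
  obtain ⟨c, hc⟩ := hEnd F hcomm
  set w := Module.Free.chooseBasis ℚ W with hw
  have htrf : LinearMap.trace ℚ W f = B u' v := by
    rw [aux_trace W w f]
    have h1 : ∀ i, w.repr (f (w i)) i = B u' (w i) * w.repr v i := by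
      intro i
      rw [hf]
      simp only [LinearMap.smulRight_apply, map_smul, Finsupp.smul_apply, smul_eq_mul]
    rw [Finset.sum_congr rfl fun i _ => h1 i, aux_sum_repr W w (B u') v]
  have htrF : LinearMap.trace ℚ W F = (Fintype.card G : ℚ) * B u' v := by
    rw [hF, map_sum]
    have h2 : ∀ g : G, LinearMap.trace ℚ W ((W.ρ g) ∘ₗ f ∘ₗ (W.ρ g⁻¹)) = B u' v := by
      intro g
      rw [LinearMap.trace_comp_comm', LinearMap.comp_assoc]
      have h3 : W.ρ g⁻¹ ∘ₗ W.ρ g = LinearMap.id := by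
        refine LinearMap.ext fun x => ?_
        simp only [LinearMap.comp_apply, LinearMap.id_apply, hρρ, inv_mul_cancel, map_one,
          Module.End.one_apply]
      rw [h3, LinearMap.comp_id, htrf]
    rw [Finset.sum_congr rfl fun g _ => h2 g, Finset.sum_const, Finset.card_univ, nsmul_eq_mul]
  have hcval : c = (Fintype.card G : ℚ) * B u' v / n := by
    rw [eq_div_iff hnQ]
    have h4 : LinearMap.trace ℚ W F = c * n := by
      rw [hc, map_smul, LinearMap.trace_id, smul_eq_mul, hn]
    rw [← h4, htrF]
  have hFval : B u (F v') = ∑ g : G, B u (W.ρ g v) * B v' (W.ρ g u') := by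
    rw [hF, LinearMap.sum_apply, map_sum]
    refine Finset.sum_congr rfl fun g _ => ?_
    simp only [LinearMap.comp_apply, hf, LinearMap.smulRight_apply, map_smul, smul_eq_mul]
    have h5 : B u' (W.ρ g⁻¹ v') = B v' (W.ρ g u') := by
      rw [← hinv g u' (W.ρ g⁻¹ v'), hρρ g g⁻¹ v', mul_inv_cancel, map_one, Module.End.one_apply,
        hsymm]
    rw [h5]
    ring
  have h6 : B u (F v') = c * B u v' := by
    rw [hc]
    simp only [LinearMap.smul_apply, LinearMap.id_apply, map_smul, smul_eq_mul]
  rw [← hFval, h6, hcval]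
  ring
end stmt9aux

set_option maxHeartbeats 1000000 in
/-- Let `(W, ρ)` be a finite-dimensional `ℚ`-representation of a finite group
`G` whose `G`-equivariant endomorphisms are exactly the rational multiples of the identity
(absolute irreducibility).  Let `B` be a `G`-invariant positive-definite symmetric bilinear
form on `W` and `w 1, …, w n` a `B`-orthogonal basis, `n = dim_ℚ W`.  Define
`p i = (n / (|G| · B(wᵢ, wᵢ))) · ∑_g B(wᵢ, g·wᵢ) · g ∈ ℚ[G]`.  Then the `p i` are
pairwise orthogonal idempotents, their sum is central, `ρ` sends the sum to the identity of
`W`, and the sum acts as zero on every irreducible `ℚ`-representation not isomorphic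
to `W`. -/
theorem stmt9 (G : Type) [Group G] [Fintype G]
    (W : FDRep ℚ G)
    (hEnd : ∀ f : W →ₗ[ℚ] W, (∀ g : G, f ∘ₗ W.ρ g = W.ρ g ∘ₗ f) →
      ∃ c : ℚ, f = c • (LinearMap.id : W →ₗ[ℚ] W))
    (B : W →ₗ[ℚ] W →ₗ[ℚ] ℚ)
    (hsymm : ∀ v w : W, B v w = B w v)
    (hposdef : ∀ v : W, v ≠ 0 → 0 < B v v)
    (hinv : ∀ (g : G) (v w : W), B (W.ρ g v) (W.ρ g w) = B v w)
    (n : ℕ) (hn : n = Module.finrank ℚ W)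
    (w : Module.Basis (Fin n) ℚ W)
    (horthb : ∀ i j, i ≠ j → B (w i) (w j) = 0)
    (p : Fin n → MonoidAlgebra ℚ G)
    (hp : ∀ i, p i = ((n : ℚ) / ((Fintype.card G : ℚ) * B (w i) (w i))) •
      ∑ g : G, MonoidAlgebra.single g (B (w i) (W.ρ g (w i)))) :
    (∀ i, p i * p i = p i) ∧
    (∀ i j, i ≠ j → p i * p j = 0) ∧
    (∑ i, p i) ∈ Subalgebra.center ℚ (MonoidAlgebra ℚ G) ∧
    Representation.asAlgebraHom W.ρ (∑ i, p i) = LinearMap.id ∧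
    ∀ W' : FDRep ℚ G, Simple W' → ¬ Nonempty (W ≅ W') →
      Representation.asAlgebraHom W'.ρ (∑ i, p i) = 0 := by
  classical
  rcases Nat.eq_zero_or_pos n with hn0 | hnpos
  · haveI : IsEmpty (Fin n) := by rw [hn0]; infer_instance
    have hsub : Subsingleton W := by
      rw [hn0] at hn
      exact Module.finrank_zero_iff.mp hn.symm
    refine ⟨fun i => isEmptyElim i, fun i => isEmptyElim i, ?_, ?_, ?_⟩
    · rw [Finset.univ_eq_empty, Finset.sum_empty]
      exact Subalgebra.zero_mem _
    · rw [Finset.univ_eq_empty, Finset.sum_empty, map_zero]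
      exact LinearMap.ext fun x => Subsingleton.elim _ _
    · intro W' _ _
      rw [Finset.univ_eq_empty, Finset.sum_empty, map_zero]
  · have hnQ : (n : ℚ) ≠ 0 := Nat.cast_ne_zero.mpr hnpos.ne'
    have hcardQ : ((Fintype.card G : ℚ)) ≠ 0 := Nat.cast_ne_zero.mpr Fintype.card_ne_zero
    have hρρ : ∀ (a b : G) (x : W), W.ρ a (W.ρ b x) = W.ρ (a * b) x := by
      intro a b x
      rw [map_mul, Module.End.mul_apply]
    have hB0 : ∀ v : W, B v v = 0 → v = 0 := by
      intro v hv
      by_contra h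
      exact (hposdef v h).ne' hv
    have hBii : ∀ i, B (w i) (w i) ≠ 0 := fun i => (hposdef (w i) (w.ne_zero i)).ne'
    have hsep : ∀ y z : W, (∀ u : W, B u y = B u z) → y = z := by
      intro y z h
      have h1 : B (y - z) (y - z) = 0 := by
        rw [map_sub, h (y - z), sub_self]
      exact sub_eq_zero.mp (hB0 _ h1)
    have hrepr : ∀ (x : W) (i : Fin n), B (w i) x = w.repr x i * B (w i) (w i) := by
      intro x i
      conv_lhs => rw [← w.sum_repr x]
      rw [map_sum, Finset.sum_eq_single i]
      · rw [map_smul, smul_eq_mul]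
      · intro j _ hj
        rw [map_smul, smul_eq_mul, horthb i j (Ne.symm hj), mul_zero]
      · intro h
        exact absurd (Finset.mem_univ i) h
    have key := aux_key W hEnd B hsymm hinv n hn hnQ
    set a : Fin n → G → ℚ := fun i g => B (w i) (W.ρ g (w i)) with ha
    set cc : Fin n → ℚ := fun i => (n : ℚ) / ((Fintype.card G : ℚ) * B (w i) (w i)) with hcc
    have hpi : ∀ i, p i = ∑ g : G, MonoidAlgebra.single g (cc i * a i g) := by
      intro i
      rw [hp i, Finset.smul_sum]
      exact Finset.sum_congr rfl fun g _ => by rw [MonoidAlgebra.smul_single']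
    -- product formula
    have hmul : ∀ i j, p i * p j = ∑ k : G, MonoidAlgebra.single k
        (cc i * cc j * (((Fintype.card G : ℚ) / n) * (B (w j) (w i) * B (w i) (W.ρ k (w j))))) := by
      intro i j
      rw [hpi i, hpi j, Finset.sum_mul_sum]
      simp_rw [MonoidAlgebra.single_mul_single]
      have reindex : ∀ g : G, ∑ h : G, MonoidAlgebra.single (g * h) (cc i * a i g * (cc j * a j h))
          = ∑ k : G, MonoidAlgebra.single k (cc i * a i g * (cc j * a j (g⁻¹ * k))) := by
        intro g
        refine Fintype.sum_equiv (Equiv.mulLeft g) _ _ fun h => ?_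
        simp only [Equiv.coe_mulLeft, inv_mul_cancel_left]
      rw [Finset.sum_congr rfl fun g _ => reindex g, Finset.sum_comm]
      refine Finset.sum_congr rfl fun k _ => ?_
      rw [show (∑ x : G, MonoidAlgebra.single k (cc i * a i x * (cc j * a j (x⁻¹ * k)))) = MonoidAlgebra.single k (∑ x : G, cc i * a i x * (cc j * a j (x⁻¹ * k))) from (map_sum (MonoidAlgebra.singleAddHom k) _ _).symm]
      congr 1
      have inner : ∑ g : G, a i g * a j (g⁻¹ * k)
          = ((Fintype.card G : ℚ) / n) * (B (w j) (w i) * B (w i) (W.ρ k (w j))) := by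
        have h7 : ∀ g : G, a j (g⁻¹ * k) = B (W.ρ k (w j)) (W.ρ g (w j)) := by
          intro g
          show B (w j) (W.ρ (g⁻¹ * k) (w j)) = _
          rw [← hinv g (w j) (W.ρ (g⁻¹ * k) (w j)), hρρ g (g⁻¹ * k) (w j),
            mul_inv_cancel_left, hsymm]
        rw [Finset.sum_congr rfl fun g _ => by rw [h7 g]]
        exact key (w i) (w i) (w j) (W.ρ k (w j))
      rw [show (∑ g : G, cc i * a i g * (cc j * a j (g⁻¹ * k)))
          = cc i * cc j * ∑ g : G, a i g * a j (g⁻¹ * k) by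
        rw [Finset.mul_sum]; exact Finset.sum_congr rfl fun g _ => by ring]
      rw [inner]
    have claim1 : ∀ i, p i * p i = p i := by
      intro i
      rw [hmul i i, hpi i]
      refine Finset.sum_congr rfl fun k _ => ?_
      congr 1
      show cc i * cc i * ((Fintype.card G : ℚ) / n * (B (w i) (w i) * B (w i) (W.ρ k (w i))))
        = cc i * B (w i) (W.ρ k (w i))
      rw [hcc]
      field_simp [hBii i]
    have claim2 : ∀ i j, i ≠ j → p i * p j = 0 := by
      intro i j hij
      rw [hmul i j, horthb j i (Ne.symm hij)]
      simp
    -- centrality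
    set t : G → ℚ := fun g => ∑ i, cc i * a i g with ht
    have he : ∑ i, p i = ∑ g : G, MonoidAlgebra.single g (t g) := by
      rw [Finset.sum_congr rfl fun i (_ : i ∈ Finset.univ) => hpi i, Finset.sum_comm]
      exact Finset.sum_congr rfl fun g _ => (map_sum (MonoidAlgebra.singleAddHom g) _ _).symm
    have hτcoef : ∀ i g, cc i * a i g
        = ((n : ℚ) / (Fintype.card G : ℚ)) * w.repr (W.ρ g (w i)) i := by
      intro i g
      have h1 : a i g = w.repr (W.ρ g (w i)) i * B (w i) (w i) := hrepr _ i
      rw [h1, hcc]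
      field_simp [hBii i]
    have hclass : ∀ u v : G, t (u * v) = t (v * u) := by
      intro u v
      rw [ht]
      simp only
      simp_rw [hτcoef]
      rw [← Finset.mul_sum, ← Finset.mul_sum]
      congr 1
      have expand : ∀ u v : G, ∑ i, w.repr (W.ρ (u * v) (w i)) i
          = ∑ i, ∑ j, w.repr (W.ρ v (w i)) j * w.repr (W.ρ u (w j)) i := by
        intro u v
        refine Finset.sum_congr rfl fun i _ => ?_
        have h2 : W.ρ (u * v) (w i) = ∑ j, w.repr (W.ρ v (w i)) j • W.ρ u (w j) := by
          rw [← hρρ u v (w i)]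
          conv_lhs => rw [← w.sum_repr (W.ρ v (w i))]
          rw [map_sum]
          exact Finset.sum_congr rfl fun j _ => map_smul _ _ _
        rw [h2, map_sum, Finsupp.finset_sum_apply]
        exact Finset.sum_congr rfl fun j _ => by rw [map_smul, Finsupp.smul_apply, smul_eq_mul]
      rw [expand u v, expand v u, Finset.sum_comm]
      exact Finset.sum_congr rfl fun i _ => Finset.sum_congr rfl fun j _ => mul_comm _ _
    have claim3 : (∑ i, p i) ∈ Subalgebra.center ℚ (MonoidAlgebra ℚ G) := by
      rw [Subalgebra.mem_center_iff]
      intro x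
      induction x using MonoidAlgebra.induction_on with
      | of g =>
        rw [he, Finset.mul_sum, Finset.sum_mul]
        simp_rw [MonoidAlgebra.of_apply, MonoidAlgebra.single_mul_single, one_mul, mul_one]
        refine Fintype.sum_equiv ((Equiv.mulLeft g).trans (Equiv.mulRight g⁻¹)) _ _ fun h => ?_
        simp only [Equiv.trans_apply, Equiv.coe_mulLeft, Equiv.coe_mulRight]
        have e1 : g * h * g⁻¹ * g = g * h := by group
        have e2 : t (g * h * g⁻¹) = t h := by
          rw [hclass (g * h) g⁻¹, inv_mul_cancel_left]
        rw [e1, e2]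
      | add f g hf hg => rw [add_mul, mul_add, hf, hg]
      | smul r f hf => rw [smul_mul_assoc, hf, mul_smul_comm]
    -- action on W
    have hproj : ∀ i (x : W), Representation.asAlgebraHom W.ρ (p i) x = w.repr x i • w i := by
      intro i x
      rw [hpi i, map_sum, LinearMap.sum_apply]
      refine hsep _ _ fun u => ?_
      rw [map_sum]
      have h1 : ∀ g : G, B u ((Representation.asAlgebraHom W.ρ
          (MonoidAlgebra.single g (cc i * a i g))) x) = (cc i * a i g) * B u (W.ρ g x) := by
        intro g
        rw [Representation.asAlgebraHom_single, LinearMap.smul_apply, map_smul, smul_eq_mul]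
      rw [Finset.sum_congr rfl fun g _ => h1 g]
      have h2 : ∑ g : G, (cc i * a i g) * B u (W.ρ g x)
          = cc i * ∑ g : G, B u (W.ρ g x) * B (w i) (W.ρ g (w i)) := by
        rw [Finset.mul_sum]
        exact Finset.sum_congr rfl fun g _ => by ring
      rw [h2, key u x (w i) (w i), map_smul, smul_eq_mul, hrepr x i, hcc]
      field_simp [hBii i]
    have claim4 : Representation.asAlgebraHom W.ρ (∑ i, p i) = LinearMap.id := by
      refine LinearMap.ext fun x => ?_
      rw [map_sum, LinearMap.sum_apply, Finset.sum_congr rfl fun i (_ : i ∈ Finset.univ) =>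
        hproj i x, LinearMap.id_apply]
      exact w.sum_repr x
    refine ⟨claim1, claim2, claim3, claim4, ?_⟩
    intro W' hS hni
    haveI := hS
    have hρρ' : ∀ (a b : G) (y : W'), W'.ρ a (W'.ρ b y) = W'.ρ (a * b) y := by
      intro a b y
      rw [map_mul, Module.End.mul_apply]
    have hhom : ∀ T : W →ₗ[ℚ] W', (∀ g : G, T ∘ₗ W.ρ g = W'.ρ g ∘ₗ T) → T = 0 := by
      intro T hTcomm
      by_contra hT0
      have hTg : ∀ (g : G) (x : W), T (W.ρ g x) = W'.ρ g (T x) :=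
        fun g x => LinearMap.congr_fun (hTcomm g) x
      set K : Submodule ℚ W := LinearMap.ker T with hK
      have hKinv : ∀ (g : G), ∀ v ∈ K, W.ρ g v ∈ K := by
        intro g v hv
        rw [hK, LinearMap.mem_ker] at hv ⊢
        rw [hTg g v, hv, map_zero]
      have hrefl : LinearMap.BilinForm.IsRefl B := fun x y h => by rw [hsymm]; exact h
      have hrestr : (LinearMap.BilinForm.restrict B K).Nondegenerate := by
        refine ⟨fun m hm => ?_, fun m hm => ?_⟩
        all_goals
          have h1 : B (m : W) (m : W) = 0 := hm m
          exact Subtype.ext (hB0 _ h1)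
      have hcompl : IsCompl K (LinearMap.BilinForm.orthogonal B K) :=
        LinearMap.BilinForm.isCompl_orthogonal_of_restrict_nondegenerate hrefl hrestr
      set Kp := LinearMap.BilinForm.orthogonal B K with hKp
      have hKpinv : ∀ (g : G), ∀ v ∈ Kp, W.ρ g v ∈ Kp := by
        intro g v hv
        refine LinearMap.BilinForm.mem_orthogonal_iff.mpr fun u hu => ?_
        show B u (W.ρ g v) = 0
        have e : B u (W.ρ g v) = B (W.ρ g⁻¹ u) v := by
          rw [← hinv g (W.ρ g⁻¹ u) v, hρρ g g⁻¹ u, mul_inv_cancel, map_one, Module.End.one_apply]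
        rw [e]
        exact LinearMap.BilinForm.mem_orthogonal_iff.mp hv _ (hKinv g⁻¹ u hu)
      set P : W →ₗ[ℚ] W := K.subtype ∘ₗ (K.linearProjOfIsCompl Kp hcompl) with hP
      have hPval : ∀ y z : W, y ∈ K → z ∈ Kp → P (y + z) = y := by
        intro y z hy hz
        have h1 : (K.linearProjOfIsCompl Kp hcompl) y = ⟨y, hy⟩ :=
          Submodule.linearProjOfIsCompl_apply_left hcompl ⟨y, hy⟩
        have h2 : (K.linearProjOfIsCompl Kp hcompl) z = 0 :=
          Submodule.projectionOnto_apply_of_mem_right hcompl hz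
        rw [hP]
        simp only [LinearMap.comp_apply, map_add, h1, h2, ZeroMemClass.coe_zero, add_zero, Submodule.coe_subtype]
      have hPmem : ∀ x : W, P x ∈ K := fun x => (K.linearProjOfIsCompl Kp hcompl x).2
      have hdec : ∀ x : W, ∃ y ∈ K, ∃ z ∈ Kp, y + z = x := fun x => by
        obtain ⟨y, z, hy, hz, e⟩ := Submodule.codisjoint_iff_exists_add_eq.mp hcompl.codisjoint x
        exact ⟨y, hy, z, hz, e⟩
      have hPcomm : ∀ g : G, P ∘ₗ W.ρ g = W.ρ g ∘ₗ P := by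
        intro g
        refine LinearMap.ext fun x => ?_
        obtain ⟨y, hy, z, hz, rfl⟩ := hdec x
        simp only [LinearMap.comp_apply]
        rw [hPval y z hy hz, map_add, hPval (W.ρ g y) (W.ρ g z) (hKinv g y hy) (hKpinv g z hz)]
      obtain ⟨c, hcP⟩ := hEnd P hPcomm
      have hPid : ∀ x ∈ K, P x = x := by
        intro x hx
        have := hPval x 0 hx (Submodule.zero_mem _)
        rwa [add_zero] at this
      set x0 : W := w ⟨0, hnpos⟩ with hx0
      have hx0ne : x0 ≠ 0 := w.ne_zero _
      have hPP : P (P x0) = P x0 := hPid _ (hPmem x0)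
      have hc2 : c * c = c := by
        rw [hcP] at hPP
        simp only [LinearMap.smul_apply, LinearMap.id_apply] at hPP
        rw [smul_smul] at hPP
        have h3 := sub_eq_zero.mpr hPP
        rw [← sub_smul] at h3
        rcases smul_eq_zero.mp h3 with h | h
        · exact sub_eq_zero.mp h
        · exact absurd h hx0ne
      rcases mul_eq_zero.mp (show c * (c - 1) = 0 by rw [mul_sub, mul_one, hc2, sub_self])
        with h | h
      · -- c = 0 : T injective, get iso, contradiction with hni
        have hinj : Function.Injective T := by
          rw [← LinearMap.ker_eq_bot, ← hK]
          refine (Submodule.eq_bot_iff _).mpr fun x hx => ?_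
          have h1 : P x = x := hPid x hx
          rw [hcP] at h1
          simp only [h, LinearMap.smul_apply, LinearMap.id_apply, zero_smul] at h1
          exact h1.symm
        let Thom : W ⟶ W' := ⟨FGModuleCat.ofHom T, fun g => by ext x; exact LinearMap.congr_fun (hTcomm g) x⟩
        haveI : Mono Thom := ConcreteCategory.mono_of_injective Thom hinj
        have hTne : Thom ≠ 0 := by
          intro h0
          apply hT0
          have : Thom.hom = 0 := by rw [h0]; rfl
          exact congrArg (fun f => f.hom.hom) this
        haveI := isIso_of_mono_of_nonzero (Y := W') hTne
        exact hni ⟨asIso Thom⟩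
      · -- c = 1 : P = id, so T = 0, contradiction
        apply hT0
        refine LinearMap.ext fun x => ?_
        have h1 : P x = x := by
          rw [hcP]
          simp [sub_eq_zero.mp h]
        have h2 : x ∈ K := h1 ▸ hPmem x
        rw [hK, LinearMap.mem_ker] at h2
        rw [h2, LinearMap.zero_apply]
    have hzero : ∀ i, Representation.asAlgebraHom W'.ρ (p i) = 0 := by
      intro i
      refine LinearMap.ext fun x' => ?_
      rw [hpi i, map_sum, LinearMap.sum_apply, LinearMap.zero_apply]
      set T : W →ₗ[ℚ] W' := ∑ g : G, LinearMap.smulRight ((B (w i)) ∘ₗ (W.ρ g⁻¹)) (W'.ρ g x')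
        with hT
      have hTc : ∀ h : G, T ∘ₗ W.ρ h = W'.ρ h ∘ₗ T := by
        intro h
        refine LinearMap.ext fun x => ?_
        simp only [LinearMap.comp_apply, hT, LinearMap.sum_apply, LinearMap.smulRight_apply,
          map_sum, map_smul]
        refine (Fintype.sum_equiv (Equiv.mulLeft h) _ _ fun g => ?_).symm
        simp only [Equiv.coe_mulLeft]
        rw [hρρ (h * g)⁻¹ h x, hρρ' h g x']
        have e3 : (h * g)⁻¹ * h = g⁻¹ := by group
        rw [e3]
      have hT0 := hhom T hTc
      have hTwi : T (w i) = ∑ g : G, a i g • W'.ρ g x' := by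
        rw [hT, LinearMap.sum_apply]
        refine Finset.sum_congr rfl fun g _ => ?_
        rw [LinearMap.smulRight_apply, LinearMap.comp_apply]
        congr 1
        show B (w i) (W.ρ g⁻¹ (w i)) = a i g
        rw [← hinv g (w i) (W.ρ g⁻¹ (w i)), hρρ g g⁻¹ (w i), mul_inv_cancel, map_one,
          Module.End.one_apply, hsymm]
      have hfin : ∑ g : G,
          (Representation.asAlgebraHom W'.ρ (MonoidAlgebra.single g (cc i * a i g))) x'
          = cc i • T (w i) := by
        rw [hTwi, Finset.smul_sum]
        refine Finset.sum_congr rfl fun g _ => ?_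
        rw [Representation.asAlgebraHom_single, LinearMap.smul_apply, smul_smul]
      rw [hfin, hT0, LinearMap.zero_apply, smul_zero]
    rw [map_sum]
    exact Finset.sum_eq_zero fun i _ => hzero i
end

section
/- Let G be a finite group and (W, ρ) a finite-dimensional ℚ-representation of G with End_{ℚ[G]}(W) = ℚ·id. Let B be a G-invariant positive-definite symmetric bilinear form on W, w_1, …, w_n a B-orthogonal basis of W with n = dim_ℚ W, and p_{w_i} := (n / (|G| · B(w_i, w_i))) · Σ_{g ∈ G} B(w_i, g·w_i) · g ∈ ℚ[G]. Then ρ(p_{w_i}) is the B-orthogonal projection of W onto the line ℚ·w_i; that is, ρ(p_{w_i})(w_i) = w_i and ρ(p_{w_i})(w_j) = 0 for all j ≠ i. -/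
/-- With `(W, ρ)` an absolutely irreducible `ℚ`-representation of a finite
group `G` (its `G`-equivariant endomorphisms are the rational multiples of the identity),
`B` a `G`-invariant positive-definite symmetric bilinear form, `w 1, …, w n` a
`B`-orthogonal basis of `W` and
`p i = (n / (|G| · B(wᵢ, wᵢ))) · ∑_g B(wᵢ, g·wᵢ) · g ∈ ℚ[G]`, the endomorphism
`ρ(p i)` is the `B`-orthogonal projection onto the line `ℚ·wᵢ`: it sends `wᵢ` to `wᵢ`
and `wⱼ` to `0` for `j ≠ i`. -/
theorem stmt10 (G : Type) [Group G] [Fintype G]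
    (W : FDRep ℚ G)
    (hEnd : ∀ f : W →ₗ[ℚ] W, (∀ g : G, f ∘ₗ W.ρ g = W.ρ g ∘ₗ f) →
      ∃ c : ℚ, f = c • (LinearMap.id : W →ₗ[ℚ] W))
    (B : W →ₗ[ℚ] W →ₗ[ℚ] ℚ)
    (hsymm : ∀ v w : W, B v w = B w v)
    (hposdef : ∀ v : W, v ≠ 0 → 0 < B v v)
    (hinv : ∀ (g : G) (v w : W), B (W.ρ g v) (W.ρ g w) = B v w)
    (n : ℕ) (hn : n = Module.finrank ℚ W)
    (w : Module.Basis (Fin n) ℚ W)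
    (horthb : ∀ i j, i ≠ j → B (w i) (w j) = 0)
    (p : Fin n → MonoidAlgebra ℚ G)
    (hp : ∀ i, p i = ((n : ℚ) / ((Fintype.card G : ℚ) * B (w i) (w i))) •
      ∑ g : G, MonoidAlgebra.single g (B (w i) (W.ρ g (w i)))) :
    ∀ i, Representation.asAlgebraHom W.ρ (p i) (w i) = w i ∧
      ∀ j, j ≠ i → Representation.asAlgebraHom W.ρ (p i) (w j) = 0 := by
  intro i
  have hn0 : (n : ℚ) ≠ 0 := Nat.cast_ne_zero.mpr (Nat.pos_of_ne_zero (by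
    rintro rfl; exact (Fin.elim0 i)) ).ne'
  have e2 : ∀ (g : G) (y : W), W.ρ g (W.ρ g⁻¹ y) = y := by
    intro g y
    have : W.ρ g * W.ρ g⁻¹ = 1 := by rw [← map_mul, mul_inv_cancel, map_one]
    calc W.ρ g (W.ρ g⁻¹ y) = (W.ρ g * W.ρ g⁻¹) y := rfl
      _ = y := by rw [this]; rfl
  -- key computation
  have key : ∀ j : Fin n,
      ∑ g : G, B (w i) (W.ρ g (w i)) • W.ρ g (w j)
        = ((Fintype.card G : ℚ) * B (w i) (w j) / n) • (w i) := by
    intro j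
    set P : W →ₗ[ℚ] W := dualTensorHom ℚ W W (B (w i) ⊗ₜ[ℚ] w j) with hP
    set A : W →ₗ[ℚ] W := ∑ g : G, W.ρ g * P * W.ρ g⁻¹ with hA
    have hcomm : ∀ h : G, A ∘ₗ W.ρ h = W.ρ h ∘ₗ A := by
      intro h
      show A * W.ρ h = W.ρ h * A
      rw [hA, Finset.sum_mul, Finset.mul_sum]
      refine Fintype.sum_equiv (Equiv.mulLeft h⁻¹) _ _ ?_
      intro g
      refine LinearMap.ext fun x => ?_
      simp only [Module.End.mul_apply, Equiv.coe_mulLeft]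
      have e1 : ∀ (a b : G) (y : W), W.ρ a (W.ρ b y) = W.ρ (a * b) y := by
        intro a b y; rw [map_mul]; rfl
      rw [e1 g⁻¹ h, e1 h (h⁻¹ * g)]
      simp only [mul_inv_cancel_left, mul_inv_rev, inv_inv]
    obtain ⟨c, hc⟩ := hEnd A hcomm
    have htrA : LinearMap.trace ℚ W A = (Fintype.card G : ℚ) * B (w i) (w j) := by
      rw [hA, map_sum]
      have : ∀ g : G, LinearMap.trace ℚ W (W.ρ g * P * W.ρ g⁻¹)
          = B (w i) (w j) := by
        intro g
        rw [LinearMap.trace_mul_comm, ← mul_assoc, ← map_mul (W.ρ)]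
        simp only [inv_mul_cancel, map_one, one_mul]
        rw [hP, LinearMap.trace_eq_contract_apply]
        rfl
      simp [this, Finset.sum_const, mul_comm]
    have htrc : LinearMap.trace ℚ W A = c * n := by
      rw [hc, map_smul, LinearMap.trace_id, ← hn, smul_eq_mul]
    have hcval : c = (Fintype.card G : ℚ) * B (w i) (w j) / n := by
      field_simp
      rw [← htrc, htrA]
    have hAwi : A (w i) = ∑ g : G, B (w i) (W.ρ g (w i)) • W.ρ g (w j) := by
      rw [hA, LinearMap.sum_apply]
      refine Finset.sum_congr rfl fun g _ => ?_
      simp only [Module.End.mul_apply, hP, dualTensorHom_apply, map_smul]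
      have hB : B (w i) (W.ρ g⁻¹ (w i)) = B (w i) (W.ρ g (w i)) := by
        calc B (w i) (W.ρ g⁻¹ (w i))
            = B (W.ρ g (w i)) (W.ρ g (W.ρ g⁻¹ (w i))) := (hinv g _ _).symm
          _ = B (W.ρ g (w i)) (w i) := by rw [e2]
          _ = B (w i) (W.ρ g (w i)) := hsymm _ _
      rw [hB]
    rw [← hAwi, hc, hcval]
    simp
  have hBii : B (w i) (w i) ≠ 0 := (hposdef (w i) (w.ne_zero i)).ne'
  have hcard : (Fintype.card G : ℚ) ≠ 0 := Nat.cast_ne_zero.mpr Fintype.card_ne_zero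
  have happ : ∀ j : Fin n, Representation.asAlgebraHom W.ρ (p i) (w j)
      = ((n : ℚ) / ((Fintype.card G : ℚ) * B (w i) (w i))) •
        ∑ g : G, B (w i) (W.ρ g (w i)) • W.ρ g (w j) := by
    intro j
    rw [hp i, map_smul, map_sum, LinearMap.smul_apply, LinearMap.sum_apply]
    congr 1
    refine Finset.sum_congr rfl fun g _ => ?_
    rw [Representation.asAlgebraHom_single]
    rfl
  constructor
  · rw [happ i, key i, smul_smul, div_mul_div_comm,
      mul_comm (n : ℚ) ((Fintype.card G : ℚ) * B (w i) (w i)),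
      div_self (mul_ne_zero (mul_ne_zero hcard hBii) hn0), one_smul]
  · intro j hj
    rw [happ j, key j, horthb i j (fun h => hj h.symm)]
    simp
end

section
/- Let G be a finite group and W a finite-dimensional irreducible ℚ-representation of G. Then the extension of scalars W ⊗_ℚ ℝ is irreducible as an ℝ-representation of G if and only if the ℚ-vector space of G-invariant symmetric bilinear forms on W is 1-dimensional. -/
open scoped TensorProduct

/-! ### Averaging of bilinear forms over a finite group -/

section Avg

variable {K : Type*} [Field K] [LinearOrder K] [IsStrictOrderedRing K] {V : Type*} [AddCommGroup V] [Module K V]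
  {G : Type} [Group G] [Fintype G]

/-- Symmetrized average of a bilinear form over the group action. -/
noncomputable def avgForm (σ : Representation K G V) (f : V →ₗ[K] V →ₗ[K] K) :
    V →ₗ[K] V →ₗ[K] K :=
  (2 * (Fintype.card G : K))⁻¹ •
    ∑ g : G, (f.compl₁₂ (σ g) (σ g) + (f.compl₁₂ (σ g) (σ g)).flip)

lemma avgForm_apply (σ : Representation K G V) (f : V →ₗ[K] V →ₗ[K] K) (v w : V) :
    avgForm σ f v w = (2 * (Fintype.card G : K))⁻¹ *
      ∑ g : G, (f (σ g v) (σ g w) + f (σ g w) (σ g v)) := by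
  simp [avgForm, LinearMap.sum_apply, Finset.sum_apply, smul_eq_mul]

lemma avgForm_symm (σ : Representation K G V) (f : V →ₗ[K] V →ₗ[K] K) (v w : V) :
    avgForm σ f v w = avgForm σ f w v := by
  simp only [avgForm_apply]
  congr 1
  exact Finset.sum_congr rfl fun g _ => add_comm _ _

lemma avgForm_invariant (σ : Representation K G V) (f : V →ₗ[K] V →ₗ[K] K) (h : G) (v w : V) :
    avgForm σ f (σ h v) (σ h w) = avgForm σ f v w := by
  simp only [avgForm_apply]
  congr 1
  refine Fintype.sum_equiv (Equiv.mulRight h) _ _ fun g => ?_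
  have e : ∀ x : V, σ (g * h) x = σ g (σ h x) := fun x => by
    rw [map_mul]; rfl
  simp [Equiv.mulRight, e]

lemma avgForm_fixed (σ : Representation K G V) (f : V →ₗ[K] V →ₗ[K] K)
    (hsym : ∀ v w, f v w = f w v) (hinv : ∀ (g : G) (v w), f (σ g v) (σ g w) = f v w) :
    avgForm σ f = f := by
  ext v w
  rw [avgForm_apply]
  have h2 : ∀ g : G, f (σ g v) (σ g w) + f (σ g w) (σ g v) = 2 * f v w := fun g => by
    rw [hinv, hinv, hsym w v]; ring
  rw [Finset.sum_congr rfl fun g _ => h2 g, Finset.sum_const, Finset.card_univ, nsmul_eq_mul]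
  have hc : (Fintype.card G : K) ≠ 0 := by
    exact_mod_cast (Nat.cast_ne_zero (R := K)).2 Fintype.card_ne_zero
  field_simp

lemma avgForm_add (σ : Representation K G V) (f f' : V →ₗ[K] V →ₗ[K] K) :
    avgForm σ (f + f') = avgForm σ f + avgForm σ f' := by
  ext v w
  simp only [avgForm_apply, LinearMap.add_apply]
  rw [← mul_add, ← Finset.sum_add_distrib]
  congr 1
  exact Finset.sum_congr rfl fun g _ => by ring

lemma avgForm_zero (σ : Representation K G V) : avgForm σ (0 : V →ₗ[K] V →ₗ[K] K) = 0 := by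
  ext v w
  simp [avgForm_apply]

lemma avgForm_smul (σ : Representation K G V) (c : K) (f : V →ₗ[K] V →ₗ[K] K) :
    avgForm σ (c • f) = c • avgForm σ f := by
  ext v w
  simp only [avgForm_apply, LinearMap.smul_apply, smul_eq_mul]
  have h3 : (∑ g : G, (c * f (σ g v) (σ g w) + c * f (σ g w) (σ g v)))
      = c * ∑ g : G, (f (σ g v) (σ g w) + f (σ g w) (σ g v)) := by
    rw [Finset.mul_sum]
    exact Finset.sum_congr rfl fun g _ => by ring
  rw [h3]
  ring

lemma avgForm_sum {α : Type*} (σ : Representation K G V) (s : Finset α)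
    (f : α → (V →ₗ[K] V →ₗ[K] K)) :
    avgForm σ (∑ a ∈ s, f a) = ∑ a ∈ s, avgForm σ (f a) := by
  classical
  induction s using Finset.induction_on with
  | empty => simpa using avgForm_zero σ
  | insert _ _ h ih =>
      rw [Finset.sum_insert h, Finset.sum_insert h, avgForm_add, ih]

/-- Sum-of-squares positive definite bilinear form attached to a basis. -/
noncomputable def posForm {ι : Type*} [Fintype ι] (b : Module.Basis ι K V) : V →ₗ[K] V →ₗ[K] K :=
  ∑ i : ι, (LinearMap.mul K K).compl₁₂ (b.coord i) (b.coord i)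

lemma posForm_apply {ι : Type*} [Fintype ι] (b : Module.Basis ι K V) (v w : V) :
    posForm b v w = ∑ i : ι, b.coord i v * b.coord i w := by
  simp [posForm, LinearMap.sum_apply, Finset.sum_apply]

lemma posForm_nonneg {ι : Type*} [Fintype ι] (b : Module.Basis ι K V) (v : V) :
    0 ≤ posForm b v v := by
  rw [posForm_apply]
  exact Finset.sum_nonneg fun i _ => mul_self_nonneg _

lemma posForm_pos {ι : Type*} [Fintype ι] (b : Module.Basis ι K V) {v : V} (hv : v ≠ 0) :
    0 < posForm b v v := by
  rw [posForm_apply]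
  refine Finset.sum_pos' (fun i _ => mul_self_nonneg _) ?_
  have : b.repr v ≠ 0 := fun h => hv (by simpa using congrArg b.repr.symm h)
  obtain ⟨i, hi⟩ := Finsupp.ne_iff.1 this
  exact ⟨i, Finset.mem_univ _, by
    have h4 : b.coord i v ≠ 0 := by simpa [Module.Basis.coord_apply] using hi
    exact mul_self_pos.2 h4⟩

lemma avgForm_pos {ι : Type*} [Fintype ι] (σ : Representation K G V) (b : Module.Basis ι K V)
    {v : V} (hv : v ≠ 0) : 0 < avgForm σ (posForm b) v v := by
  rw [avgForm_apply]
  have hcard : (0 : K) < 2 * (Fintype.card G : K) := by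
    have : (0 : K) < (Fintype.card G : K) := by
      exact_mod_cast Fintype.card_pos
    linarith
  refine mul_pos (inv_pos.2 hcard) (Finset.sum_pos' (fun g _ => ?_) ⟨1, Finset.mem_univ _, ?_⟩)
  · linarith [posForm_nonneg b (σ g v)]
  · have h1 : σ (1 : G) v = v := by rw [map_one]; rfl
    rw [h1]
    have := posForm_pos b hv
    linarith

end Avg

/-! ### Base change to ℝ -/

section BC

variable {G : Type} [Group G] [Fintype G]
  {W : Type} [AddCommGroup W] [Module ℚ W]

/-- Base change of a rational representation to the reals. -/
noncomputable def repR (ρ : Representation ℚ G W) : Representation ℝ G (ℝ ⊗[ℚ] W) where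
  toFun g := (ρ g).baseChange ℝ
  map_one' := by simpa using LinearMap.baseChange_one ℝ W
  map_mul' g h := by simpa using LinearMap.baseChange_mul (A := ℝ) (ρ g) (ρ h)

lemma repR_tmul (ρ : Representation ℚ G W) (g : G) (a : ℝ) (v : W) :
    repR ρ g (a ⊗ₜ[ℚ] v) = a ⊗ₜ[ℚ] (ρ g v) := rfl

lemma repR_apply (ρ : Representation ℚ G W) (g : G) (x : ℝ ⊗[ℚ] W) :
    repR ρ g x = (ρ g).baseChange ℝ x := rfl

lemma bc_tmul (B : W →ₗ[ℚ] W →ₗ[ℚ] ℚ) (a a' : ℝ) (v w : W) :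
    LinearMap.BilinForm.baseChange ℝ B (a ⊗ₜ[ℚ] v) (a' ⊗ₜ[ℚ] w) = (B v w : ℚ) • (a * a') :=
  rfl

/-- Extensionality for bilinear forms on `ℝ ⊗ W` via pure tensors. -/
lemma bilin_ext {F F' : (ℝ ⊗[ℚ] W) →ₗ[ℝ] (ℝ ⊗[ℚ] W) →ₗ[ℝ] ℝ}
    (h : ∀ (a a' : ℝ) (v w : W), F (a ⊗ₜ[ℚ] v) (a' ⊗ₜ[ℚ] w) = F' (a ⊗ₜ[ℚ] v) (a' ⊗ₜ[ℚ] w)) :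
    F = F' := by
  apply LinearMap.ext; intro x
  apply LinearMap.ext; intro y
  induction x using TensorProduct.induction_on with
  | zero => simp
  | tmul a v =>
      induction y using TensorProduct.induction_on with
      | zero => simp
      | tmul a' w => exact h a a' v w
      | add y₁ y₂ h₁ h₂ => simp [map_add, h₁, h₂]
  | add x₁ x₂ h₁ h₂ => simp [map_add, LinearMap.add_apply, h₁, h₂]

lemma bc_symm {B : W →ₗ[ℚ] W →ₗ[ℚ] ℚ} (h : ∀ v w, B v w = B w v) (x y : ℝ ⊗[ℚ] W) :
    LinearMap.BilinForm.baseChange ℝ B x y = LinearMap.BilinForm.baseChange ℝ B y x := by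
  have : LinearMap.BilinForm.baseChange ℝ B = (LinearMap.BilinForm.baseChange ℝ B).flip := by
    apply bilin_ext
    intro a a' v w
    simp [bc_tmul, LinearMap.flip_apply, h v w, mul_comm]
  conv_lhs => rw [this]
  rfl

lemma bc_invariant {ρ : Representation ℚ G W} {B : W →ₗ[ℚ] W →ₗ[ℚ] ℚ}
    (h : ∀ (g : G) (v w), B (ρ g v) (ρ g w) = B v w) (g : G) (x y : ℝ ⊗[ℚ] W) :
    LinearMap.BilinForm.baseChange ℝ B (repR ρ g x) (repR ρ g y)
      = LinearMap.BilinForm.baseChange ℝ B x y := by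
  have : (LinearMap.BilinForm.baseChange ℝ B).compl₁₂ (repR ρ g) (repR ρ g)
      = LinearMap.BilinForm.baseChange ℝ B := by
    apply bilin_ext
    intro a a' v w
    simp only [LinearMap.compl₁₂_apply, repR_tmul, bc_tmul, h g v w]
  calc LinearMap.BilinForm.baseChange ℝ B (repR ρ g x) (repR ρ g y)
      = (LinearMap.BilinForm.baseChange ℝ B).compl₁₂ (repR ρ g) (repR ρ g) x y := rfl
    _ = LinearMap.BilinForm.baseChange ℝ B x y := by rw [this]

lemma bc_qsmul (q : ℚ) (B : W →ₗ[ℚ] W →ₗ[ℚ] ℚ) :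
    LinearMap.BilinForm.baseChange ℝ (q • B) = (q : ℝ) • LinearMap.BilinForm.baseChange ℝ B := by
  apply bilin_ext
  intro a a' v w
  simp only [LinearMap.smul_apply, bc_tmul, LinearMap.smul_apply, Rat.smul_def, smul_eq_mul]
  push_cast
  ring

lemma avg_bc (ρ : Representation ℚ G W) (B : W →ₗ[ℚ] W →ₗ[ℚ] ℚ) :
    avgForm (repR ρ) (LinearMap.BilinForm.baseChange ℝ B)
      = LinearMap.BilinForm.baseChange ℝ (avgForm ρ B) := by
  apply bilin_ext
  intro a a' v w
  rw [avgForm_apply, bc_tmul, avgForm_apply]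
  simp only [repR_tmul, bc_tmul, Rat.smul_def]
  push_cast
  rw [mul_assoc]
  congr 1
  rw [Finset.sum_mul]
  exact Finset.sum_congr rfl fun g _ => by ring

end BC

section Main

variable {G : Type} [Group G] [Fintype G]
  {W : Type} [AddCommGroup W] [Module ℚ W]

lemma bilin_span {ι : Type*} [Fintype ι] [DecidableEq ι] (b : Module.Basis ι ℚ W)
    (C : (ℝ ⊗[ℚ] W) →ₗ[ℝ] (ℝ ⊗[ℚ] W) →ₗ[ℝ] ℝ) :
    C = ∑ p : ι × ι, C ((1:ℝ) ⊗ₜ[ℚ] b p.1) ((1:ℝ) ⊗ₜ[ℚ] b p.2) •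
        LinearMap.BilinForm.baseChange ℝ
          ((LinearMap.mul ℚ ℚ).compl₁₂ (b.coord p.1) (b.coord p.2)) := by
  have key : ∀ (p : ι × ι) (k l : ι),
      (LinearMap.BilinForm.baseChange ℝ
          ((LinearMap.mul ℚ ℚ).compl₁₂ (b.coord p.1) (b.coord p.2)))
        ((1:ℝ) ⊗ₜ[ℚ] b k) ((1:ℝ) ⊗ₜ[ℚ] b l) = if p = (k, l) then 1 else 0 := by
    intro p k l
    rw [bc_tmul]
    simp only [LinearMap.compl₁₂_apply, LinearMap.mul_apply', Module.Basis.coord_apply,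
      Module.Basis.repr_self, Finsupp.single_apply, Rat.smul_def, mul_one]
    rcases eq_or_ne p.1 k with h1 | h1
    · rcases eq_or_ne p.2 l with h2 | h2
      · subst h1; subst h2; simp
      · have h2' : ¬ (l = p.2) := fun h => h2 h.symm
        simp [h1, h2, h2', Prod.ext_iff]
    · have h1' : ¬ (k = p.1) := fun h => h1 h.symm
      simp [h1, h1', Prod.ext_iff, ite_self]
  refine (b.baseChange ℝ).ext fun k => (b.baseChange ℝ).ext fun l => ?_
  rw [Module.Basis.baseChange_apply, Module.Basis.baseChange_apply]
  rw [LinearMap.sum_apply, LinearMap.sum_apply]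
  simp only [LinearMap.smul_apply, smul_eq_mul, key]
  rw [Finset.sum_congr rfl (fun p _ => by rw [mul_ite, mul_one, mul_zero])]
  rw [Finset.sum_ite_eq' Finset.univ ((k, l) : ι × ι)]
  simp

lemma descent (ρ : Representation ℚ G W) [FiniteDimensional ℚ W]
    (B0 : W →ₗ[ℚ] W →ₗ[ℚ] ℚ)
    (hB0span : ∀ f : W →ₗ[ℚ] W →ₗ[ℚ] ℚ, (∀ v w, f v w = f w v) →
      (∀ (g : G) (v w), f (ρ g v) (ρ g w) = f v w) → ∃ q : ℚ, f = q • B0)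
    (C : (ℝ ⊗[ℚ] W) →ₗ[ℝ] (ℝ ⊗[ℚ] W) →ₗ[ℝ] ℝ)
    (hCsym : ∀ x y, C x y = C y x)
    (hCinv : ∀ (g : G) (x y), C (repR ρ g x) (repR ρ g y) = C x y) :
    ∃ r : ℝ, C = r • LinearMap.BilinForm.baseChange ℝ B0 := by
  classical
  set b := Module.finBasis ℚ W with hb
  set f : (Fin (Module.finrank ℚ W) × Fin (Module.finrank ℚ W)) → (W →ₗ[ℚ] W →ₗ[ℚ] ℚ) :=
    fun p => (LinearMap.mul ℚ ℚ).compl₁₂ (b.coord p.1) (b.coord p.2) with hf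
  set c : (Fin (Module.finrank ℚ W) × Fin (Module.finrank ℚ W)) → ℝ :=
    fun p => C ((1:ℝ) ⊗ₜ[ℚ] b p.1) ((1:ℝ) ⊗ₜ[ℚ] b p.2) with hc
  choose q hq using fun p => hB0span (avgForm ρ (f p)) (avgForm_symm ρ (f p))
    (fun g v w => avgForm_invariant ρ (f p) g v w)
  refine ⟨∑ p, c p * (q p : ℝ), ?_⟩
  calc C = avgForm (repR ρ) C := (avgForm_fixed _ _ hCsym hCinv).symm
    _ = avgForm (repR ρ) (∑ p, c p • LinearMap.BilinForm.baseChange ℝ (f p)) := by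
        rw [← bilin_span b C]
    _ = ∑ p, avgForm (repR ρ) (c p • LinearMap.BilinForm.baseChange ℝ (f p)) :=
        avgForm_sum _ _ _
    _ = ∑ p, c p • avgForm (repR ρ) (LinearMap.BilinForm.baseChange ℝ (f p)) := by
        exact Finset.sum_congr rfl fun p _ => avgForm_smul _ _ _
    _ = ∑ p, c p • LinearMap.BilinForm.baseChange ℝ (avgForm ρ (f p)) := by
        exact Finset.sum_congr rfl fun p _ => by rw [avg_bc]
    _ = ∑ p, c p • LinearMap.BilinForm.baseChange ℝ ((q p : ℚ) • B0) := by
        exact Finset.sum_congr rfl fun p _ => by rw [← hq p]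
    _ = ∑ p, (c p * (q p : ℝ)) • LinearMap.BilinForm.baseChange ℝ B0 := by
        exact Finset.sum_congr rfl fun p _ => by rw [bc_qsmul, smul_smul]
    _ = (∑ p, c p * (q p : ℝ)) • LinearMap.BilinForm.baseChange ℝ B0 := by
        rw [Finset.sum_smul]

end Main
open scoped TensorProduct

section Fwd

variable {G : Type} [Group G] [Fintype G]
  {W : Type} [AddCommGroup W] [Module ℚ W]

lemma rep_cancel {K : Type*} [Field K] {V : Type*} [AddCommGroup V] [Module K V]
    (σ : Representation K G V) (g : G) (y : V) : σ g (σ g⁻¹ y) = y := by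
  have h : σ g * σ g⁻¹ = 1 := by rw [← map_mul, mul_inv_cancel, map_one]
  calc σ g (σ g⁻¹ y) = (σ g * σ g⁻¹) y := rfl
    _ = y := by rw [h]; rfl

/-- Core of the forward direction: under irreducibility of the base change, every
invariant symmetric rational form becomes a real multiple of the averaged inner form. -/
lemma scalar_of_irred (ρ : Representation ℚ G W) [FiniteDimensional ℚ W]
    (hirrR : ∀ U : Submodule ℝ (ℝ ⊗[ℚ] W),
      (∀ g : G, ∀ x ∈ U, LinearMap.baseChange ℝ (ρ g) x ∈ U) → U = ⊥ ∨ U = ⊤)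
    (hNT : Nontrivial (ℝ ⊗[ℚ] W))
    (B : W →ₗ[ℚ] W →ₗ[ℚ] ℚ) (hsym : ∀ v w, B v w = B w v)
    (hinv : ∀ (g : G) (v w), B (ρ g v) (ρ g w) = B v w) :
    ∃ μ : ℝ, ∀ x y, LinearMap.BilinForm.baseChange ℝ B x y
      = μ * avgForm (repR ρ) (posForm ((Module.finBasis ℚ W).baseChange ℝ)) x y := by
  classical
  set E := ℝ ⊗[ℚ] W
  set Binn : E →ₗ[ℝ] E →ₗ[ℝ] ℝ :=
    avgForm (repR ρ) (posForm ((Module.finBasis ℚ W).baseChange ℝ)) with hBinn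
  have hIpos : ∀ x : E, x ≠ 0 → 0 < Binn x x := fun x hx =>
    avgForm_pos (repR ρ) _ hx
  have hIsym : ∀ x y : E, Binn x y = Binn y x := avgForm_symm _ _
  have hIinv : ∀ (g : G) (x y : E), Binn (repR ρ g x) (repR ρ g y) = Binn x y :=
    fun g x y => avgForm_invariant _ _ g x y
  have hnd : LinearMap.BilinForm.Nondegenerate Binn := by
    refine ⟨fun x hx => ?_, fun x hx => ?_⟩
    · by_contra hx0
      exact (hIpos x hx0).ne' (hx x)
    · by_contra hx0
      exact (hIpos x hx0).ne' (hx x)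
  set Bℝ : E →ₗ[ℝ] E →ₗ[ℝ] ℝ := LinearMap.BilinForm.baseChange ℝ B with hBr
  -- inner product space structure
  letI core : InnerProductSpace.Core ℝ E :=
    { inner := fun x y => Binn x y
      conj_inner_symm := fun x y => by simpa using hIsym y x
      re_inner_nonneg := fun x => by
        rcases eq_or_ne x 0 with h | h
        · simp [h]
        · simpa using (hIpos x h).le
      add_left := fun x y z => by simp [map_add, LinearMap.add_apply]
      smul_left := fun x y r => by simp [map_smul, smul_eq_mul]
      definite := fun x hx => by
        by_contra h
        exact (hIpos x h).ne' hx }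
  letI : NormedAddCommGroup E := core.toNormedAddCommGroup
  letI : InnerProductSpace ℝ E := InnerProductSpace.ofCore core.toCore
  have hinner : ∀ x y : E, @inner ℝ E _ x y = Binn x y := fun x y => rfl
  -- the operator T
  set T : E →ₗ[ℝ] E :=
    ((LinearMap.BilinForm.toDual Binn hnd).symm : Module.Dual ℝ E →ₗ[ℝ] E).comp Bℝ with hT
  have hTval : ∀ x y : E, Binn (T x) y = Bℝ x y := by
    intro x y
    have h1 : (LinearMap.BilinForm.toDual Binn hnd) (T x) = Bℝ x :=
      (LinearMap.BilinForm.toDual Binn hnd).apply_symm_apply _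
    calc Binn (T x) y = (LinearMap.BilinForm.toDual Binn hnd) (T x) y := rfl
      _ = Bℝ x y := by rw [h1]
  have hBsymR : ∀ x y : E, Bℝ x y = Bℝ y x := bc_symm hsym
  have hBinvR : ∀ (g : G) (x y : E), Bℝ (repR ρ g x) (repR ρ g y) = Bℝ x y :=
    bc_invariant hinv
  have hTsym : T.IsSymmetric := by
    intro x y
    rw [hinner, hinner, hTval]
    rw [hIsym x (T y), hTval, hBsymR]
  -- equivariance of T
  have hTequi : ∀ (g : G) (x : E), T (repR ρ g x) = repR ρ g (T x) := by
    intro g x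
    have hz : ∀ y : E, Binn (T (repR ρ g x) - repR ρ g (T x)) y = 0 := by
      intro y
      rw [map_sub, LinearMap.sub_apply]
      have e1 : Binn (T (repR ρ g x)) y = Bℝ (repR ρ g x) y := hTval _ _
      have e2 : Binn (repR ρ g (T x)) y = Bℝ (repR ρ g x) y := by
        conv_lhs => rw [← rep_cancel (repR ρ) g y]
        rw [hIinv g (T x) (repR ρ g⁻¹ y), hTval]
        conv_rhs => rw [← rep_cancel (repR ρ) g y]
        rw [hBinvR g x (repR ρ g⁻¹ y)]
      rw [e1, e2, sub_self]
    exact sub_eq_zero.1 (hnd.1 _ hz)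
  -- eigenvalue
  haveI : FiniteDimensional ℝ E := inferInstance
  obtain ⟨μ, hμ⟩ : ∃ μ : ℝ, Module.End.HasEigenvalue T μ :=
    ⟨_, hTsym.hasEigenvalue_iSup_of_finiteDimensional⟩
  have hU : Module.End.eigenspace T μ = ⊤ := by
    rcases hirrR (Module.End.eigenspace T μ) (fun g x hx => by
      have hx' : T x = μ • x := Module.End.mem_eigenspace_iff.1 hx
      refine Module.End.mem_eigenspace_iff.2 ?_
      have : LinearMap.baseChange ℝ (ρ g) x = repR ρ g x := rfl
      rw [this, hTequi g x, hx', map_smul]) with h | h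
    · exact absurd h (Module.End.hasEigenvalue_iff.1 hμ)
    · exact h
  refine ⟨μ, fun x y => ?_⟩
  have hx : T x = μ • x := Module.End.mem_eigenspace_iff.1 (hU ▸ Submodule.mem_top)
  rw [← hTval, hx, map_smul, LinearMap.smul_apply, smul_eq_mul]

end Fwd
/-- Let `W` be a finite-dimensional irreducible `ℚ`-representation of a
finite group `G`.  Then the extension of scalars `ℝ ⊗_ℚ W` is irreducible as an
`ℝ`-representation of `G` if and only if the `ℚ`-vector space `S` of `G`-invariant
symmetric bilinear forms on `W` is `1`-dimensional. -/
theorem stmt11 (G : Type) [Group G] [Fintype G]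
    (W : Type) [AddCommGroup W] [Module ℚ W] [FiniteDimensional ℚ W]
    (ρ : Representation ℚ G W)
    (hirr : Nontrivial W ∧
      ∀ U : Submodule ℚ W, (∀ g : G, ∀ x ∈ U, ρ g x ∈ U) → U = ⊥ ∨ U = ⊤)
    (S : Submodule ℚ (W →ₗ[ℚ] W →ₗ[ℚ] ℚ))
    (hS : (S : Set (W →ₗ[ℚ] W →ₗ[ℚ] ℚ)) =
      {B | (∀ v w : W, B v w = B w v) ∧ ∀ (g : G) (v w : W), B (ρ g v) (ρ g w) = B v w}) :
    ((Nontrivial (ℝ ⊗[ℚ] W) ∧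
        ∀ U : Submodule ℝ (ℝ ⊗[ℚ] W),
          (∀ g : G, ∀ x ∈ U, LinearMap.baseChange ℝ (ρ g) x ∈ U) → U = ⊥ ∨ U = ⊤) ↔
      Module.finrank ℚ S = 1) := by
  classical
  obtain ⟨hW, _⟩ := hirr
  obtain ⟨v0, hv0⟩ := exists_ne (0 : W)
  set B0 : W →ₗ[ℚ] W →ₗ[ℚ] ℚ := avgForm ρ (posForm (Module.finBasis ℚ W)) with hB0def
  have hB0sym : ∀ v w, B0 v w = B0 w v := avgForm_symm ρ _
  have hB0inv : ∀ (g : G) (v w : W), B0 (ρ g v) (ρ g w) = B0 v w := fun g v w =>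
    avgForm_invariant ρ _ g v w
  have hB0S : B0 ∈ S := by
    have h : B0 ∈ (S : Set (W →ₗ[ℚ] W →ₗ[ℚ] ℚ)) := by
      rw [hS]; exact ⟨hB0sym, hB0inv⟩
    exact h
  have hB0pos : 0 < B0 v0 v0 := avgForm_pos ρ (Module.finBasis ℚ W) hv0
  have hB0ne : B0 ≠ 0 := by
    intro h; rw [h] at hB0pos; simp at hB0pos
  set Binn : (ℝ ⊗[ℚ] W) →ₗ[ℝ] (ℝ ⊗[ℚ] W) →ₗ[ℝ] ℝ :=
    avgForm (repR ρ) (posForm ((Module.finBasis ℚ W).baseChange ℝ)) with hBinn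
  have hIsym : ∀ x y, Binn x y = Binn y x := avgForm_symm _ _
  have hIinv : ∀ (g : G) (x y), Binn (repR ρ g x) (repR ρ g y) = Binn x y :=
    fun g x y => avgForm_invariant _ _ g x y
  have hIpos : ∀ x, x ≠ 0 → 0 < Binn x x := fun x hx => avgForm_pos _ _ hx
  have hbcq : ∀ (B : W →ₗ[ℚ] W →ₗ[ℚ] ℚ) (v w : W),
      LinearMap.BilinForm.baseChange ℝ B ((1:ℝ) ⊗ₜ[ℚ] v) ((1:ℝ) ⊗ₜ[ℚ] w) = (B v w : ℝ) := by
    intro B v w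
    rw [bc_tmul]
    simp [Rat.smul_def]
  have hpos0 : (0:ℝ) < (B0 v0 v0 : ℝ) := by exact_mod_cast hB0pos
  have he0 : ((1:ℝ) ⊗ₜ[ℚ] v0 : ℝ ⊗[ℚ] W) ≠ 0 := by
    intro h
    have h2 := hbcq B0 v0 v0
    rw [h] at h2
    simp only [map_zero, LinearMap.zero_apply] at h2
    exact hpos0.ne h2
  constructor
  · rintro ⟨hNT, hirrR⟩
    have key : ∀ B ∈ S, ∃ q : ℚ, B = q • B0 := by
      intro B hB
      have hBmem : (∀ v w, B v w = B w v) ∧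
          ∀ (g : G) (v w : W), B (ρ g v) (ρ g w) = B v w := by
        have h : B ∈ (S : Set (W →ₗ[ℚ] W →ₗ[ℚ] ℚ)) := hB
        rw [hS] at h; exact h
      obtain ⟨μ, hμ⟩ := scalar_of_irred ρ hirrR hNT B hBmem.1 hBmem.2
      obtain ⟨μ0, hμ0⟩ := scalar_of_irred ρ hirrR hNT B0 hB0sym hB0inv
      refine ⟨B v0 v0 / B0 v0 v0, ?_⟩
      have hmain : ∀ v w : W, B v w * B0 v0 v0 = B v0 v0 * B0 v w := by
        intro v w
        have e1 : (B v w : ℝ) = μ * Binn ((1:ℝ) ⊗ₜ[ℚ] v) ((1:ℝ) ⊗ₜ[ℚ] w) := by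
          rw [← hbcq B v w]; exact hμ _ _
        have e2 : (B0 v w : ℝ) = μ0 * Binn ((1:ℝ) ⊗ₜ[ℚ] v) ((1:ℝ) ⊗ₜ[ℚ] w) := by
          rw [← hbcq B0 v w]; exact hμ0 _ _
        have e3 : (B v0 v0 : ℝ) = μ * Binn ((1:ℝ) ⊗ₜ[ℚ] v0) ((1:ℝ) ⊗ₜ[ℚ] v0) := by
          rw [← hbcq B v0 v0]; exact hμ _ _
        have e4 : (B0 v0 v0 : ℝ) = μ0 * Binn ((1:ℝ) ⊗ₜ[ℚ] v0) ((1:ℝ) ⊗ₜ[ℚ] v0) := by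
          rw [← hbcq B0 v0 v0]; exact hμ0 _ _
        have : (B v w : ℝ) * (B0 v0 v0 : ℝ) = (B v0 v0 : ℝ) * (B0 v w : ℝ) := by
          rw [e1, e2, e3, e4]; ring
        exact_mod_cast this
      ext v w
      simp only [LinearMap.smul_apply, smul_eq_mul]
      have h := hmain v w
      field_simp
      linarith [h]
    have hle : S ≤ Submodule.span ℚ {B0} := fun B hB => by
      obtain ⟨q, hq⟩ := key B hB
      exact Submodule.mem_span_singleton.2 ⟨q, hq.symm⟩
    have hge : Submodule.span ℚ {B0} ≤ S := Submodule.span_le.2 (by simpa using hB0S)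
    rw [le_antisymm hle hge]
    exact finrank_span_singleton hB0ne
  · intro hrank
    have hspan : Submodule.span ℚ {B0} = S := by
      refine Submodule.eq_of_le_of_finrank_le (Submodule.span_le.2 (by simpa using hB0S)) ?_
      rw [hrank, finrank_span_singleton hB0ne]
    have hmul : ∀ f : W →ₗ[ℚ] W →ₗ[ℚ] ℚ, (∀ v w, f v w = f w v) →
        (∀ (g : G) (v w : W), f (ρ g v) (ρ g w) = f v w) → ∃ q : ℚ, f = q • B0 := by
      intro f hs hi
      have h : f ∈ S := by
        have h' : f ∈ (S : Set (W →ₗ[ℚ] W →ₗ[ℚ] ℚ)) := by rw [hS]; exact ⟨hs, hi⟩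
        exact h'
      rw [← hspan] at h
      obtain ⟨q, hq⟩ := Submodule.mem_span_singleton.1 h
      exact ⟨q, hq.symm⟩
    refine ⟨⟨(1:ℝ) ⊗ₜ[ℚ] v0, 0, he0⟩, ?_⟩
    intro U hU
    by_contra hcon
    push_neg at hcon
    obtain ⟨hUbot, hUtop⟩ := hcon
    -- inner product structure from Binn
    letI core : InnerProductSpace.Core ℝ (ℝ ⊗[ℚ] W) :=
      { inner := fun x y => Binn x y
        conj_inner_symm := fun x y => by simpa using hIsym y x
        re_inner_nonneg := fun x => by
          rcases eq_or_ne x 0 with h | h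
          · simp [h]
          · simpa using (hIpos x h).le
        add_left := fun x y z => by simp [map_add, LinearMap.add_apply]
        smul_left := fun x y r => by simp [map_smul, smul_eq_mul]
        definite := fun x hx => by
          by_contra h
          exact (hIpos x h).ne' hx }
    letI : NormedAddCommGroup (ℝ ⊗[ℚ] W) := core.toNormedAddCommGroup
    letI : InnerProductSpace ℝ (ℝ ⊗[ℚ] W) := InnerProductSpace.ofCore core.toCore
    have hinner : ∀ x y : ℝ ⊗[ℚ] W, @inner ℝ _ _ x y = Binn x y := fun x y => rfl
    haveI : CompleteSpace U := FiniteDimensional.complete ℝ U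
    set P : (ℝ ⊗[ℚ] W) →ₗ[ℝ] (ℝ ⊗[ℚ] W) :=
      U.subtype.comp (U.orthogonalProjectionOnto).toLinearMap with hPdef
    have hPapp : ∀ x, P x = U.starProjection x := fun _ => rfl
    have hPmem : ∀ x, P x ∈ U := fun x => (U.orthogonalProjectionOnto x).2
    have hUinv : ∀ (g : G), ∀ x ∈ U, repR ρ g x ∈ U := fun g x hx => hU g x hx
    have hequi : ∀ (g : G) (x), P (repR ρ g x) = repR ρ g (P x) := by
      intro g x
      rw [hPapp]
      refine Submodule.eq_starProjection_of_mem_of_inner_eq_zero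
        (hUinv g (P x) (hPmem x)) ?_
      intro w hw
      rw [hinner]
      have h1 : repR ρ g x - repR ρ g (P x) = repR ρ g (x - P x) := by
        rw [map_sub]
      rw [h1]
      conv_lhs => rw [← rep_cancel (repR ρ) g w]
      rw [hIinv g (x - P x) (repR ρ g⁻¹ w)]
      have h2 : x - P x ∈ Uᗮ := by
        rw [hPapp]
        exact Submodule.sub_starProjection_mem_orthogonal x
      have h3 : repR ρ g⁻¹ w ∈ U := hUinv g⁻¹ w hw
      have := (Submodule.mem_orthogonal U (x - P x)).1 h2 _ h3
      rw [hinner] at this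
      rw [← hIsym]
      exact this
    set Cl : (ℝ ⊗[ℚ] W) →ₗ[ℝ] (ℝ ⊗[ℚ] W) →ₗ[ℝ] ℝ := Binn.compl₁₂ P LinearMap.id with hCl
    have hClapp : ∀ x y, Cl x y = Binn (P x) y := fun x y => rfl
    have hCsym : ∀ x y, Cl x y = Cl y x := by
      intro x y
      rw [hClapp, hClapp]
      have h1 := Submodule.inner_starProjection_left_eq_right U x y
      rw [hinner, hinner] at h1
      rw [hPapp, hPapp, h1, hIsym]
    have hCinv : ∀ (g : G) (x y), Cl (repR ρ g x) (repR ρ g y) = Cl x y := by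
      intro g x y
      rw [hClapp, hClapp, hequi, hIinv]
    obtain ⟨r, hr⟩ := descent ρ B0 hmul Cl hCsym hCinv
    obtain ⟨t, ht⟩ := descent ρ B0 hmul Binn hIsym hIinv
    have hIpos0 : 0 < Binn ((1:ℝ) ⊗ₜ[ℚ] v0) ((1:ℝ) ⊗ₜ[ℚ] v0) := hIpos _ he0
    have htne : t ≠ 0 := by
      intro h
      rw [ht, h] at hIpos0
      simp at hIpos0
    have hc : ∀ x y, Binn (P x) y = (r / t) * Binn x y := by
      intro x y
      have h1 : Cl x y = r * LinearMap.BilinForm.baseChange ℝ B0 x y := by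
        rw [hr]; simp [smul_eq_mul]
      have h2 : Binn x y = t * LinearMap.BilinForm.baseChange ℝ B0 x y := by
        rw [ht]; simp [smul_eq_mul]
      rw [← hClapp, h1, h2]
      field_simp
    obtain ⟨u, huU, hune⟩ := (Submodule.ne_bot_iff U).1 hUbot
    have hPu : P u = u := by
      rw [hPapp]
      exact Submodule.eq_starProjection_of_mem_of_inner_eq_zero huU
        (fun w _ => by simp)
    have hc1 : r / t = 1 := by
      have h := hc u u
      rw [hPu] at h
      have hne : Binn u u ≠ 0 := (hIpos u hune).ne'
      have h' : (r / t) * Binn u u = 1 * Binn u u := by rw [one_mul]; exact h.symm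
      exact mul_right_cancel₀ hne h'
    obtain ⟨x, hxU⟩ : ∃ x : ℝ ⊗[ℚ] W, x ∉ U := by
      by_contra h
      push_neg at h
      exact hUtop (Submodule.eq_top_iff'.2 h)
    have hPx : P x = x := by
      have hxy : ∀ y, Binn (P x - x) y = 0 := by
        intro y
        rw [map_sub, LinearMap.sub_apply, hc x y, hc1, one_mul, sub_self]
      by_contra hne
      exact (hIpos _ (sub_ne_zero.2 hne)).ne' (hxy (P x - x))
    exact hxU (hPx ▸ hPmem x)
end
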